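/- arXiv:2302.00311 — 4 statements merged into one kernel-verified Lean document; each statement's English description precedes it below -/
import Mathlib

section
/- Let d ≠ 0, ζ ∈ ℝ, μ ≠ 0, f₀ ∈ ℝ, and let u₀ be a non-constant, non-degenerate 2π-periodic C² solution of the stationary equation with parameter ε = 0. Let φ₀* be a nonzero 2π-periodic C² solution of L_{u₀}* ψ = 0. Then u₀' and φ₀* are linearly independent over ℝ, i.e. there are no real numbers (a,b) ≠ (0,0) with a·u₀'(x) + b·φ₀*(x) = 0 for all x. -/
noncomputable section

open Real MeasureTheory Set

/-- 2π-periodicity. -/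
def Per (f : ℝ → ℂ) : Prop := Function.Periodic f (2 * Real.pi)

/-- Squared L² norm on [-π, π]. -/
def L2sq (v : ℝ → ℂ) : ℝ := ∫ x in (-Real.pi)..Real.pi, ‖v x‖ ^ 2

/-- L² norm on [-π, π]. -/
def L2norm (v : ℝ → ℂ) : ℝ := Real.sqrt (L2sq v)

/-- H¹ norm. -/
def H1norm (v : ℝ → ℂ) : ℝ := Real.sqrt (L2sq v + L2sq (deriv v))

/-- H² norm. -/
def H2norm (v : ℝ → ℂ) : ℝ :=
  Real.sqrt (L2sq v + L2sq (deriv v) + L2sq (deriv (deriv v)))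

/-- A stationary solution of the (perturbed) Lugiato–Lefever equation with parameter ε:
a 2π-periodic C² function `u` with
`-d u'' + i ε V u' + (ζ - iμ) u - |u|² u + i f₀ = 0`. -/
def StatSol (d ζ μ f₀ ε : ℝ) (V : ℝ → ℝ) (u : ℝ → ℂ) : Prop :=
  ContDiff ℝ 2 u ∧ Per u ∧ ∀ x : ℝ,
    -(d : ℂ) * deriv (deriv u) x + Complex.I * (ε : ℂ) * (V x : ℂ) * deriv u x
      + ((ζ : ℂ) - Complex.I * (μ : ℂ)) * u x
      - ((‖u x‖ ^ 2 : ℝ) : ℂ) * u x + Complex.I * (f₀ : ℂ) = 0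

/-- The linearized operator `L_u φ = -d φ'' + (ζ - iμ - 2|u|²) φ - u² conj(φ)`. -/
def Lop (d ζ μ : ℝ) (u φ : ℝ → ℂ) : ℝ → ℂ := fun x =>
  -(d : ℂ) * deriv (deriv φ) x
    + ((ζ : ℂ) - Complex.I * (μ : ℂ) - 2 * ((‖u x‖ ^ 2 : ℝ) : ℂ)) * φ x
    - (u x) ^ 2 * (starRingEnd ℂ) (φ x)

/-- The adjoint linearized operator `L_u* ψ = -d ψ'' + (ζ + iμ - 2|u|²) ψ - u² conj(ψ)`. -/
def LopAdj (d ζ μ : ℝ) (u ψ : ℝ → ℂ) : ℝ → ℂ := fun x =>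
  -(d : ℂ) * deriv (deriv ψ) x
    + ((ζ : ℂ) + Complex.I * (μ : ℂ) - 2 * ((‖u x‖ ^ 2 : ℝ) : ℂ)) * ψ x
    - (u x) ^ 2 * (starRingEnd ℂ) (ψ x)

/-- Non-degeneracy: every 2π-periodic C² solution of `L_{u₀} φ = 0` is a real
multiple of `u₀'`. -/
def NonDeg (d ζ μ : ℝ) (u₀ : ℝ → ℂ) : Prop :=
  ∀ φ : ℝ → ℂ, ContDiff ℝ 2 φ → Per φ → (∀ x, Lop d ζ μ u₀ φ x = 0) →
    ∃ a : ℝ, ∀ x, φ x = (a : ℂ) * deriv u₀ x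

/-- The effective potential `V_eff(σ) = Re ∫ i V(x+σ) u₀'(x) conj(φ₀*(x)) dx`. -/
def Veff (V : ℝ → ℝ) (u₀ φ₀ : ℝ → ℂ) (σ : ℝ) : ℝ :=
  (∫ x in (-Real.pi)..Real.pi,
    Complex.I * (V (x + σ) : ℂ) * deriv u₀ x * (starRingEnd ℂ) (φ₀ x)).re

/-- The expression `Re ∫ i V'(x+σ) u₀'(x) conj(φ₀*(x)) dx` for `V_eff'(σ)`. -/
def VeffD (V : ℝ → ℝ) (u₀ φ₀ : ℝ → ℂ) (σ : ℝ) : ℝ :=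
  (∫ x in (-Real.pi)..Real.pi,
    Complex.I * ((deriv V (x + σ) : ℝ) : ℂ) * deriv u₀ x * (starRingEnd ℂ) (φ₀ x)).re


private lemma normsq_cast (z : ℂ) : ((‖z‖^2 : ℝ) : ℂ) = z * (starRingEnd ℂ) z := by
  rw [Complex.mul_conj]; norm_cast; rw [← Complex.normSq_eq_norm_sq]

private lemma diff_deriv {f : ℝ → ℂ} (h : ContDiff ℝ 2 f) : Differentiable ℝ (deriv f) := by
  have h' : ContDiff ℝ ((1:ℕ) + 1) f := by exact_mod_cast h
  exact (contDiff_succ_iff_deriv.mp h').2.2.differentiable (by simp)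

/-- The derivative of a stationary solution lies in the kernel of the linearization. -/
private lemma lop_deriv_zero (d ζ μ f₀ : ℝ) (hd : d ≠ 0) (u₀ : ℝ → ℂ)
    (hu₀ : StatSol d ζ μ f₀ 0 (fun _ => 0) u₀) :
    ∀ x, Lop d ζ μ u₀ (deriv u₀) x = 0 := by
  obtain ⟨hC, -, heq⟩ := hu₀
  have hdC : (d : ℂ) ≠ 0 := Complex.ofReal_ne_zero.mpr hd
  have hdiff : Differentiable ℝ u₀ := hC.differentiable (by norm_num)
  set G : ℝ → ℂ := fun y =>
    (((ζ : ℂ) - Complex.I * μ) * u₀ y - (u₀ y * (starRingEnd ℂ) (u₀ y)) * u₀ y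
      + Complex.I * f₀) / d with hGdef
  have hGeq : deriv (deriv u₀) = G := by
    funext y
    have h := heq y
    simp only [Complex.ofReal_zero, mul_zero, zero_mul, add_zero] at h
    rw [normsq_cast] at h
    simp only [hGdef]
    rw [eq_div_iff hdC]
    linear_combination -h
  intro x
  have hu : HasDerivAt u₀ (deriv u₀ x) x := (hdiff x).hasDerivAt
  have hcu : HasDerivAt (fun y => (starRingEnd ℂ) (u₀ y)) ((starRingEnd ℂ) (deriv u₀ x)) x := by
    simpa only [RCLike.star_def] using hu.star
  have hG : HasDerivAt G
      ((((ζ : ℂ) - Complex.I * μ) * deriv u₀ x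
        - ((deriv u₀ x * (starRingEnd ℂ) (u₀ x) + u₀ x * (starRingEnd ℂ) (deriv u₀ x)) * u₀ x
          + (u₀ x * (starRingEnd ℂ) (u₀ x)) * deriv u₀ x)) / d) x := by
    exact (((hu.const_mul ((ζ : ℂ) - Complex.I * μ)).sub ((hu.mul hcu).mul hu)).add_const
      (Complex.I * f₀)).div_const d
  have h3 : deriv (deriv (deriv u₀)) x
      = (((ζ : ℂ) - Complex.I * μ) * deriv u₀ x
        - ((deriv u₀ x * (starRingEnd ℂ) (u₀ x) + u₀ x * (starRingEnd ℂ) (deriv u₀ x)) * u₀ x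
          + (u₀ x * (starRingEnd ℂ) (u₀ x)) * deriv u₀ x)) / d := by
    rw [hGeq]; exact hG.deriv
  simp only [Lop, h3, normsq_cast]
  field_simp
  ring

/-- **Lemma (parity, part (i) of Lemma in the paper): `u₀'` and `φ₀*` are linearly
independent over ℝ.** -/
theorem stmt_3
    (d ζ μ f₀ : ℝ) (hd : d ≠ 0) (hμ : μ ≠ 0)
    (u₀ : ℝ → ℂ) (hu₀ : StatSol d ζ μ f₀ 0 (fun _ => 0) u₀)
    (hu₀nc : ∃ x y : ℝ, u₀ x ≠ u₀ y)
    (hnd : NonDeg d ζ μ u₀)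
    (φ₀ : ℝ → ℂ) (hφ₀C : ContDiff ℝ 2 φ₀) (hφ₀per : Per φ₀)
    (hφ₀ne : ∃ x, φ₀ x ≠ 0)
    (hφ₀ker : ∀ x, LopAdj d ζ μ u₀ φ₀ x = 0) :
    ∀ a b : ℝ, (∀ x : ℝ, (a : ℂ) * deriv u₀ x + (b : ℂ) * φ₀ x = 0) →
      a = 0 ∧ b = 0 := by
  intro a b hab
  have hdiff : Differentiable ℝ u₀ := hu₀.1.differentiable (by norm_num)
  have hnc : ¬ ∀ x, deriv u₀ x = 0 := by
    intro h
    obtain ⟨x, y, hxy⟩ := hu₀nc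
    exact hxy (is_const_of_deriv_eq_zero hdiff h x y)
  have key := lop_deriv_zero d ζ μ f₀ hd u₀ hu₀
  by_cases ha : a = 0
  · refine ⟨ha, ?_⟩
    by_contra hb
    obtain ⟨x, hx⟩ := hφ₀ne
    have := hab x
    rw [ha] at this
    simp only [Complex.ofReal_zero, zero_mul, zero_add] at this
    exact hx ((mul_eq_zero.mp this).resolve_left (Complex.ofReal_ne_zero.mpr hb))
  · exfalso
    have hb : b ≠ 0 := by
      intro hb
      apply hnc
      intro x
      have := hab x
      rw [hb] at this
      simp only [Complex.ofReal_zero, zero_mul, add_zero] at this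
      exact (mul_eq_zero.mp this).resolve_left (Complex.ofReal_ne_zero.mpr ha)
    set c : ℝ := -b / a with hc
    have hcne : c ≠ 0 := by
      simp [hc, hb, ha]
    have haC : (a : ℂ) ≠ 0 := Complex.ofReal_ne_zero.mpr ha
    have hder : deriv u₀ = fun x => (c : ℂ) * φ₀ x := by
      funext x
      have := hab x
      have hcC : (c : ℂ) = -b / a := by push_cast [hc]; ring
      rw [hcC]
      field_simp
      linear_combination this
    have hφd : Differentiable ℝ φ₀ := hφ₀C.differentiable (by norm_num)
    have hφd2 : Differentiable ℝ (deriv φ₀) := diff_deriv hφ₀C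
    have hd1 : deriv (deriv u₀) = fun y => (c : ℂ) * deriv φ₀ y := by
      funext y
      rw [hder]
      exact deriv_const_mul (c : ℂ) (hφd y)
    obtain ⟨x, hx⟩ := hφ₀ne
    have hd2 : deriv (deriv (deriv u₀)) x = (c : ℂ) * deriv (deriv φ₀) x := by
      rw [hd1]
      exact deriv_const_mul (c : ℂ) (hφd2 x)
    have e1 := key x
    have e2 := hφ₀ker x
    simp only [Lop, LopAdj] at e1 e2
    rw [hd2] at e1
    have hderx : deriv u₀ x = (c : ℂ) * φ₀ x := by rw [hder]
    rw [hderx] at e1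
    have hconjc : (starRingEnd ℂ) ((c : ℂ) * φ₀ x) = (c : ℂ) * (starRingEnd ℂ) (φ₀ x) := by
      rw [map_mul, Complex.conj_ofReal]
    rw [hconjc] at e1
    have hzero : (2 : ℂ) * Complex.I * μ * c * φ₀ x = 0 := by
      linear_combination (c : ℂ) * e2 - e1
    have hμC : (μ : ℂ) ≠ 0 := Complex.ofReal_ne_zero.mpr hμ
    have hcC : (c : ℂ) ≠ 0 := Complex.ofReal_ne_zero.mpr hcne
    have := mul_eq_zero.mp hzero
    rcases this with h | h
    · rcases mul_eq_zero.mp h with h | h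
      · rcases mul_eq_zero.mp h with h | h
        · rcases mul_eq_zero.mp h with h | h
          · norm_num at h
          · exact Complex.I_ne_zero h
        · exact hμC h
      · exact hcC h
    · exact hx h
end
end

section
/- Let d ≠ 0, ζ, μ, f₀ ∈ ℝ, let V : ℝ → ℝ be 2π-periodic and continuously differentiable, and let u*, φ* : ℝ → ℂ be 2π-periodic C² functions such that u* is a stationary solution with parameter ε = 0, L_{u*}* φ* = 0, and Re ∫_{−π}^{π} i u*'(x) conj(φ*(x)) dx = 1. Suppose ε ↦ u(ε), ε ↦ v(ε) are families of 2π-periodic functions, jointly C³ in (x, ε) on ℝ × (−ε*, ε*), and λ₀ : (−ε*, ε*) → ℝ is continuously differentiable, such that for every ε: u(ε) is a stationary solution with parameter ε, the pair (Re v(ε), Im v(ε)) composed into w(ε) := ((v(ε))₁, (v(ε))₂) satisfies L̃_{u(ε),ε} w(ε) = λ₀(ε) w(ε), u(0) = u*, λ₀(0) = 0, and v(0) = u*'. Then λ₀'(0) = − Re ∫_{−π}^{π} i V'(x) u*'(x) conj(φ*(x)) dx. -/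
noncomputable section

open Real MeasureTheory Set

/-- A pair of complex-valued functions on ℝ. -/
abbrev FPair := (ℝ → ℂ) × (ℝ → ℂ)

/-- The self-adjoint part `A_u` of the linearization, acting on pairs. -/
def Aop (d ζ : ℝ) (u : ℝ → ℂ) (w : FPair) : FPair :=
  (fun x => -(d : ℂ) * deriv (deriv w.1) x
      + ((ζ : ℂ) - 3 * ((u x).re : ℂ) ^ 2 - ((u x).im : ℂ) ^ 2) * w.1 x
      - 2 * ((u x).re : ℂ) * ((u x).im : ℂ) * w.2 x,
   fun x => -(d : ℂ) * deriv (deriv w.2) x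
      + ((ζ : ℂ) - ((u x).re : ℂ) ^ 2 - 3 * ((u x).im : ℂ) ^ 2) * w.2 x
      - 2 * ((u x).re : ℂ) * ((u x).im : ℂ) * w.1 x)

/-- The symplectic matrix `J (w₁, w₂) = (w₂, -w₁)`. -/
def Jop (w : FPair) : FPair := (w.2, fun x => -(w.1 x))

/-- The linearization `L̃_{u,ε} w = J (A_u w) - μ w + ε V (w₁', w₂')`. -/
def Ltilde (d ζ μ ε : ℝ) (V : ℝ → ℝ) (u : ℝ → ℂ) (w : FPair) : FPair :=
  (fun x => (Jop (Aop d ζ u w)).1 x - (μ : ℂ) * w.1 x + (ε : ℂ) * (V x : ℂ) * deriv w.1 x,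
   fun x => (Jop (Aop d ζ u w)).2 x - (μ : ℂ) * w.2 x + (ε : ℂ) * (V x : ℂ) * deriv w.2 x)

/-- Admissible pair: both components are 2π-periodic and C². -/
def AdmPair (w : FPair) : Prop :=
  ContDiff ℝ 2 w.1 ∧ ContDiff ℝ 2 w.2 ∧ Per w.1 ∧ Per w.2

/-- `lam` is an eigenvalue of `L̃_{u,ε}`. -/
def IsEig (d ζ μ ε : ℝ) (V : ℝ → ℝ) (u : ℝ → ℂ) (lam : ℂ) : Prop :=
  ∃ w : FPair, AdmPair w ∧ ¬ (∀ x, w.1 x = 0 ∧ w.2 x = 0) ∧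
    ∀ x, (Ltilde d ζ μ ε V u w).1 x = lam * w.1 x ∧
         (Ltilde d ζ μ ε V u w).2 x = lam * w.2 x

/-- Spectral stability: every eigenvalue has nonpositive real part. -/
def SpecStable (d ζ μ ε : ℝ) (V : ℝ → ℝ) (u : ℝ → ℂ) : Prop :=
  ∀ lam : ℂ, IsEig d ζ μ ε V u lam → lam.re ≤ 0

/-- Spectral instability: some eigenvalue has positive real part. -/
def SpecUnstable (d ζ μ ε : ℝ) (V : ℝ → ℝ) (u : ℝ → ℂ) : Prop :=
  ∃ lam : ℂ, IsEig d ζ μ ε V u lam ∧ 0 < lam.re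

/-- Assumption (A2): 0 is an eigenvalue of `L̃_{u₀,0}`, algebraically simple with
eigenspace spanned by `(Re u₀', Im u₀')`, and the rest of the eigenvalues have
real part at most `-ξ < 0`. -/
def AssumptionA2 (d ζ μ : ℝ) (u₀ : ℝ → ℂ) : Prop :=
  IsEig d ζ μ 0 (fun _ => 0) u₀ 0 ∧
  (∀ w : FPair, AdmPair w →
      (∀ x, (Ltilde d ζ μ 0 (fun _ => 0) u₀ w).1 x = 0 ∧
            (Ltilde d ζ μ 0 (fun _ => 0) u₀ w).2 x = 0) →
      ∃ c : ℂ, ∀ x, w.1 x = c * ((deriv u₀ x).re : ℂ) ∧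
                    w.2 x = c * ((deriv u₀ x).im : ℂ)) ∧
  (¬ ∃ w : FPair, AdmPair w ∧
      ∀ x, (Ltilde d ζ μ 0 (fun _ => 0) u₀ w).1 x = ((deriv u₀ x).re : ℂ) ∧
           (Ltilde d ζ μ 0 (fun _ => 0) u₀ w).2 x = ((deriv u₀ x).im : ℂ)) ∧
  (∃ ξ : ℝ, 0 < ξ ∧
    ∀ lam : ℂ, IsEig d ζ μ 0 (fun _ => 0) u₀ lam → lam ≠ 0 → lam.re ≤ -ξ)

/-- The pair `(Re v, Im v)` of a complex-valued function, viewed as complex-valued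
components. -/
def PairOf (v : ℝ → ℂ) : FPair :=
  (fun x => ((v x).re : ℂ), fun x => ((v x).im : ℂ))

/- ===================== auxiliary lemmas ===================== -/

section Aux

open Real MeasureTheory Set intervalIntegral Filter Metric

lemma Per.eq_neg {f : ℝ → ℂ} (hp : Per f) : f Real.pi = f (-Real.pi) := by
  have := hp (-Real.pi)
  rw [show -Real.pi + 2*Real.pi = Real.pi by ring] at this
  exact this

lemma Per.deriv' {f : ℝ → ℂ} (h : Per f) : Per (deriv f) := by
  intro x
  have h1 : (fun y => f (y + 2 * Real.pi)) = f := funext fun y => h y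
  calc deriv f (x + 2 * Real.pi) = deriv (fun y => f (y + 2 * Real.pi)) x := by
        rw [deriv_comp_add_const]
    _ = deriv f x := by rw [h1]

lemma Per.conj' {f : ℝ → ℂ} (h : Per f) : Per (fun y => (starRingEnd ℂ) (f y)) :=
  fun x => by simp [h x]

lemma hasDerivAt_conj {f : ℝ → ℂ} {c : ℂ} {x : ℝ} (h : HasDerivAt f c x) :
    HasDerivAt (fun y => (starRingEnd ℂ) (f y)) ((starRingEnd ℂ) c) x := by
  exact h.star

lemma contDiff_conj {n : ℕ∞} {f : ℝ → ℂ} (h : ContDiff ℝ n f) :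
    ContDiff ℝ n (fun y => (starRingEnd ℂ) (f y)) :=
  Complex.conjCLE.toContinuousLinearMap.contDiff.comp h

lemma hasDerivAt_reCoe {f : ℝ → ℂ} {c : ℂ} {x : ℝ} (h : HasDerivAt f c x) :
    HasDerivAt (fun y => ((f y).re : ℂ)) ((c.re : ℂ)) x := by
  have := (Complex.reCLM.hasFDerivAt.comp_hasDerivAt x h)
  exact (Complex.ofRealCLM.hasFDerivAt.comp_hasDerivAt x this)

lemma hasDerivAt_imCoe {f : ℝ → ℂ} {c : ℂ} {x : ℝ} (h : HasDerivAt f c x) :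
    HasDerivAt (fun y => ((f y).im : ℂ)) ((c.im : ℂ)) x := by
  have := (Complex.imCLM.hasFDerivAt.comp_hasDerivAt x h)
  exact (Complex.ofRealCLM.hasFDerivAt.comp_hasDerivAt x this)

lemma ContDiff.derivC {f : ℝ → ℂ} (h : ContDiff ℝ 2 f) : ContDiff ℝ 1 (deriv f) := by
  have h2 : ContDiff ℝ (1+1) f := h
  exact (contDiff_succ_iff_deriv.mp h2).2.2

lemma ContDiff.derivC3 {f : ℝ → ℂ} (h : ContDiff ℝ 3 f) : ContDiff ℝ 2 (deriv f) := by
  have h2 : ContDiff ℝ (2+1) f := h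
  exact (contDiff_succ_iff_deriv.mp h2).2.2

lemma ContDiff.cont2 {f : ℝ → ℂ} (h : ContDiff ℝ 2 f) :
    Continuous (deriv (deriv f)) := h.derivC.continuous_deriv le_rfl

lemma ContDiff.hasD {f : ℝ → ℂ} (h : ContDiff ℝ 1 f) (x : ℝ) :
    HasDerivAt f (deriv f x) x := (h.differentiable (by norm_num) x).hasDerivAt

lemma conj_sub_re (z : ℂ) : ((starRingEnd ℂ) z - z).re = 0 := by simp

lemma re_integral (f : ℝ → ℂ) (hf : IntervalIntegrable f volume (-Real.pi) Real.pi) :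
    (∫ x in (-Real.pi)..Real.pi, f x).re = ∫ x in (-Real.pi)..Real.pi, (f x).re := by
  have := Complex.reCLM.intervalIntegral_comp_comm hf
  simp only [Complex.reCLM_apply] at this
  exact this.symm

lemma normSq_coe (z : ℂ) : ((‖z‖ ^ 2 : ℝ) : ℂ) = z * (starRingEnd ℂ) z := by
  rw [Complex.mul_conj]
  norm_cast
  rw [Complex.sq_norm]

lemma deriv_conj_fun {f : ℝ → ℂ} (hf : Differentiable ℝ f) :
    deriv (fun y => (starRingEnd ℂ) (f y)) = fun x => (starRingEnd ℂ) (deriv f x) := by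
  funext x
  exact (hasDerivAt_conj (hf x).hasDerivAt).deriv

lemma deriv2_conj_fun {f : ℝ → ℂ} (hf : ContDiff ℝ 2 f) :
    deriv (deriv (fun y => (starRingEnd ℂ) (f y)))
      = fun x => (starRingEnd ℂ) (deriv (deriv f) x) := by
  rw [deriv_conj_fun (hf.differentiable (by norm_num))]
  exact deriv_conj_fun (hf.derivC.differentiable (by norm_num))

lemma hasDerivAt_mul_cont {lam R : ℝ → ℝ} {l' : ℝ}
    (hl : HasDerivAt lam l' 0) (h0 : lam 0 = 0) (hR : ContinuousAt R 0) :
    HasDerivAt (fun ε => lam ε * R ε) (l' * R 0) 0 := by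
  rw [hasDerivAt_iff_tendsto_slope]
  have hs : Tendsto (slope lam 0) (nhdsWithin 0 {(0:ℝ)}ᶜ) (nhds l') :=
    hasDerivAt_iff_tendsto_slope.mp hl
  have hR' : Tendsto R (nhdsWithin 0 {(0:ℝ)}ᶜ) (nhds (R 0)) :=
    hR.continuousWithinAt.tendsto
  refine (hs.mul hR').congr' ?_
  filter_upwards [self_mem_nhdsWithin] with ε hε
  have hε0 : ε ≠ 0 := hε
  simp [slope, h0]
  field_simp

lemma integral_deriv_periodic (f : ℝ → ℂ) (hf : ContDiff ℝ 1 f) (hp : Per f) :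
    ∫ x in (-Real.pi)..Real.pi, deriv f x = 0 := by
  rw [integral_deriv_eq_sub (fun x _ => hf.differentiable (by norm_num) x)
    ((hf.continuous_deriv le_rfl).intervalIntegrable _ _), hp.eq_neg, sub_self]

lemma ibp_periodic (f g f' g' : ℝ → ℂ)
    (hf : ∀ x, HasDerivAt f (f' x) x) (hg : ∀ x, HasDerivAt g (g' x) x)
    (hf' : Continuous f') (hg' : Continuous g')
    (hpf : Per f) (hpg : Per g) :
    ∫ x in (-Real.pi)..Real.pi, f x * g' x = - ∫ x in (-Real.pi)..Real.pi, f' x * g x := by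
  have h := intervalIntegral.integral_mul_deriv_eq_deriv_mul
    (a := -Real.pi) (b := Real.pi) (u := f) (v := g) (u' := f') (v' := g')
    (fun x _ => hf x) (fun x _ => hg x)
    (hf'.intervalIntegrable _ _) (hg'.intervalIntegrable _ _)
  rw [h, hpf.eq_neg, hpg.eq_neg]; ring

lemma ibp2_periodic (f g : ℝ → ℂ) (hf : ContDiff ℝ 2 f) (hg : ContDiff ℝ 2 g)
    (hpf : Per f) (hpg : Per g) :
    ∫ x in (-Real.pi)..Real.pi, deriv (deriv f) x * g x
      = ∫ x in (-Real.pi)..Real.pi, f x * deriv (deriv g) x := by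
  have e1 : ∫ x in (-Real.pi)..Real.pi, g x * deriv (deriv f) x
      = - ∫ x in (-Real.pi)..Real.pi, deriv g x * deriv f x :=
    ibp_periodic g (deriv f) (deriv g) (deriv (deriv f))
      (fun x => (hg.of_le (by norm_num)).hasD x) (fun x => hf.derivC.hasD x)
      ((hg.derivC).continuous) hf.cont2 hpg hpf.deriv'
  have e2 : ∫ x in (-Real.pi)..Real.pi, f x * deriv (deriv g) x
      = - ∫ x in (-Real.pi)..Real.pi, deriv f x * deriv g x :=
    ibp_periodic f (deriv g) (deriv f) (deriv (deriv g))
      (fun x => (hf.of_le (by norm_num)).hasD x) (fun x => hg.derivC.hasD x)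
      ((hf.derivC).continuous) hg.cont2 hpf hpg.deriv'
  calc ∫ x in (-Real.pi)..Real.pi, deriv (deriv f) x * g x
      = ∫ x in (-Real.pi)..Real.pi, g x * deriv (deriv f) x := by
        apply intervalIntegral.integral_congr; intro x _; ring
    _ = - ∫ x in (-Real.pi)..Real.pi, deriv g x * deriv f x := e1
    _ = - ∫ x in (-Real.pi)..Real.pi, deriv f x * deriv g x := by
        congr 1; apply intervalIntegral.integral_congr; intro x _; ring
    _ = ∫ x in (-Real.pi)..Real.pi, f x * deriv (deriv g) x := e2.symm

end Aux
/- ===================== adjoint identity ===================== -/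

section Adjoint

open Real MeasureTheory Set intervalIntegral Filter Metric

lemma adjoint_re (d ζ μ : ℝ) (uu g ψ : ℝ → ℂ) (huu : Continuous uu)
    (hg : ContDiff ℝ 2 g) (hψ : ContDiff ℝ 2 ψ) (hpg : Per g) (hpψ : Per ψ) :
    (∫ x in (-Real.pi)..Real.pi, Lop d ζ μ uu g x * (starRingEnd ℂ) (ψ x)).re
      = (∫ x in (-Real.pi)..Real.pi, g x * (starRingEnd ℂ) (LopAdj d ζ μ uu ψ x)).re := by
  have hψc : ContDiff ℝ 2 (fun y => (starRingEnd ℂ) (ψ y)) := contDiff_conj hψ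
  have cg : Continuous g := hg.continuous
  have cψ : Continuous ψ := hψ.continuous
  have cg2 : Continuous (deriv (deriv g)) := hg.cont2
  have cψ2 : Continuous (deriv (deriv ψ)) := hψ.cont2
  have cψc2 : Continuous (deriv (deriv (fun y => (starRingEnd ℂ) (ψ y)))) := hψc.cont2
  have cconjψ : Continuous (fun x => (starRingEnd ℂ) (ψ x)) := continuous_star.comp cψ
  have cconjg : Continuous (fun x => (starRingEnd ℂ) (g x)) := continuous_star.comp cg
  have cLop : Continuous (fun x => Lop d ζ μ uu g x * (starRingEnd ℂ) (ψ x)) := by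
    unfold Lop; fun_prop
  have cAdjv : Continuous (fun x => LopAdj d ζ μ uu ψ x) := by
    unfold LopAdj; fun_prop
  have cAdj : Continuous (fun x => g x * (starRingEnd ℂ) (LopAdj d ζ μ uu ψ x)) :=
    cg.mul (continuous_star.comp cAdjv)
  rw [re_integral _ (cLop.intervalIntegrable _ _), re_integral _ (cAdj.intervalIntegrable _ _)]
  have key : ∀ x, (Lop d ζ μ uu g x * (starRingEnd ℂ) (ψ x)).re
      = (g x * (starRingEnd ℂ) (LopAdj d ζ μ uu ψ x)).re
        + (-(d:ℂ) * (deriv (deriv g) x * (starRingEnd ℂ) (ψ x)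
            - g x * deriv (deriv (fun y => (starRingEnd ℂ) (ψ y))) x)).re := by
    intro x
    have hd2 : deriv (deriv (fun y => (starRingEnd ℂ) (ψ y))) x
        = (starRingEnd ℂ) (deriv (deriv ψ) x) := by rw [deriv2_conj_fun hψ]
    have hre : ((starRingEnd ℂ) (uu x ^ 2 * (starRingEnd ℂ) (g x) * (starRingEnd ℂ) (ψ x))
        - uu x ^ 2 * (starRingEnd ℂ) (g x) * (starRingEnd ℂ) (ψ x)).re = 0 :=
      conj_sub_re _
    have expand : Lop d ζ μ uu g x * (starRingEnd ℂ) (ψ x)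
        = g x * (starRingEnd ℂ) (LopAdj d ζ μ uu ψ x)
          + (-(d:ℂ) * (deriv (deriv g) x * (starRingEnd ℂ) (ψ x)
              - g x * (starRingEnd ℂ) (deriv (deriv ψ) x)))
          + ((starRingEnd ℂ) (uu x ^ 2 * (starRingEnd ℂ) (g x) * (starRingEnd ℂ) (ψ x))
              - uu x ^ 2 * (starRingEnd ℂ) (g x) * (starRingEnd ℂ) (ψ x)) := by
      unfold Lop LopAdj
      simp only [map_add, map_sub, map_mul, map_neg, map_pow, map_ofNat,
        Complex.conj_ofReal, Complex.conj_I, Complex.conj_conj]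
      ring
    rw [expand, hd2]
    simp only [Complex.add_re, hre, add_zero]
  rw [intervalIntegral.integral_congr (g :=
    fun x => (g x * (starRingEnd ℂ) (LopAdj d ζ μ uu ψ x)).re
      + (-(d:ℂ) * (deriv (deriv g) x * (starRingEnd ℂ) (ψ x)
          - g x * deriv (deriv (fun y => (starRingEnd ℂ) (ψ y))) x)).re)
    (fun x _ => key x)]
  have hib : ∫ x in (-Real.pi)..Real.pi, deriv (deriv g) x * (starRingEnd ℂ) (ψ x)
      = ∫ x in (-Real.pi)..Real.pi, g x * deriv (deriv (fun y => (starRingEnd ℂ) (ψ y))) x :=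
    ibp2_periodic g (fun y => (starRingEnd ℂ) (ψ y)) hg hψc hpg hpψ.conj'
  have cc1 : Continuous fun x => deriv (deriv g) x * (starRingEnd ℂ) (ψ x) := cg2.mul cconjψ
  have cc2 : Continuous fun x => g x * deriv (deriv (fun y => (starRingEnd ℂ) (ψ y))) x :=
    cg.mul cψc2
  have h1 : IntervalIntegrable (fun x => (g x * (starRingEnd ℂ) (LopAdj d ζ μ uu ψ x)).re)
      volume (-Real.pi) Real.pi := (Complex.continuous_re.comp cAdj).intervalIntegrable _ _
  have h2 : IntervalIntegrable (fun x => (-(d:ℂ) * (deriv (deriv g) x * (starRingEnd ℂ) (ψ x)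
      - g x * deriv (deriv (fun y => (starRingEnd ℂ) (ψ y))) x)).re) volume (-Real.pi) Real.pi :=
    (Complex.continuous_re.comp (continuous_const.mul (cc1.sub cc2))).intervalIntegrable _ _
  rw [intervalIntegral.integral_add h1 h2]
  have hz : ∫ x in (-Real.pi)..Real.pi,
      (-(d:ℂ) * (deriv (deriv g) x * (starRingEnd ℂ) (ψ x)
        - g x * deriv (deriv (fun y => (starRingEnd ℂ) (ψ y))) x)).re = 0 := by
    rw [← re_integral _ ((continuous_const.fun_mul (cc1.fun_sub cc2)).intervalIntegrable _ _)]
    rw [intervalIntegral.integral_const_mul, intervalIntegral.integral_sub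
      (cc1.intervalIntegrable _ _) (cc2.intervalIntegrable _ _), hib, sub_self, mul_zero]
    simp
  rw [hz, add_zero]

end Adjoint

/- ===================== parametric integrals ===================== -/

section Param

open Real MeasureTheory Set intervalIntegral Filter Metric

lemma slice_cont {F : ℝ → ℝ → ℂ} {δ : ℝ} (hδ : 0 < δ)
    (hFc : ContinuousOn (fun p : ℝ × ℝ => F p.1 p.2) (closedBall 0 δ ×ˢ (univ : Set ℝ)))
    {ε : ℝ} (hε : ε ∈ closedBall (0:ℝ) δ) : Continuous (F ε) := by
  rw [← continuousOn_univ]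
  have : ContinuousOn (fun x : ℝ => ((ε, x) : ℝ × ℝ)) univ := (continuous_const.prodMk continuous_id).continuousOn
  exact hFc.comp this (fun x _ => ⟨hε, trivial⟩)

lemma param_bound {F : ℝ → ℝ → ℂ} {δ : ℝ}
    (hFc : ContinuousOn (fun p : ℝ × ℝ => F p.1 p.2) (closedBall 0 δ ×ˢ (univ : Set ℝ))) :
    ∃ M : ℝ, ∀ ε ∈ closedBall (0:ℝ) δ, ∀ x ∈ Set.uIcc (-Real.pi) Real.pi, ‖F ε x‖ ≤ M := by
  have hK : IsCompact ((closedBall (0:ℝ) δ) ×ˢ Set.uIcc (-Real.pi) Real.pi) :=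
    (isCompact_closedBall _ _).prod isCompact_uIcc
  obtain ⟨M, hM⟩ := hK.exists_bound_of_continuousOn
    (hFc.mono (Set.prod_mono_right (Set.subset_univ _)))
  exact ⟨M, fun ε hε x hx => hM (ε, x) ⟨hε, hx⟩⟩

lemma param_hasDerivAt (F F' : ℝ → ℝ → ℂ) (δ : ℝ) (hδ : 0 < δ)
    (hFc : ContinuousOn (fun p : ℝ × ℝ => F p.1 p.2) (closedBall 0 δ ×ˢ (univ : Set ℝ)))
    (hF'c : ContinuousOn (fun p : ℝ × ℝ => F' p.1 p.2) (closedBall 0 δ ×ˢ (univ : Set ℝ)))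
    (hder : ∀ x : ℝ, ∀ ε ∈ Metric.ball (0:ℝ) δ, HasDerivAt (fun e => F e x) (F' ε x) ε) :
    HasDerivAt (fun ε => ∫ x in (-Real.pi)..Real.pi, F ε x)
      (∫ x in (-Real.pi)..Real.pi, F' 0 x) 0 := by
  obtain ⟨M, hM⟩ := param_bound hF'c
  have h0 : (0:ℝ) ∈ closedBall (0:ℝ) δ := by simp [hδ.le]
  have := intervalIntegral.hasDerivAt_integral_of_dominated_loc_of_deriv_le
    (𝕜 := ℝ) (μ := volume) (a := -Real.pi) (b := Real.pi) (F := F) (F' := F')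
    (x₀ := 0) (bound := fun _ => M) (Metric.ball_mem_nhds 0 hδ)
    ?_ (((slice_cont hδ hFc h0)).intervalIntegrable _ _)
    ((slice_cont hδ hF'c h0)).aestronglyMeasurable ?_
    (intervalIntegrable_const) ?_
  · exact this.2
  · filter_upwards [Metric.closedBall_mem_nhds (0:ℝ) hδ] with ε hε
    exact (slice_cont hδ hFc hε).aestronglyMeasurable
  · refine Filter.Eventually.of_forall (fun t ht hx => ?_)
    intro hxmem
    exact hM _ (Metric.ball_subset_closedBall hxmem) t (Set.uIoc_subset_uIcc ht)
  · refine Filter.Eventually.of_forall (fun t ht => ?_)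
    intro ε hε
    exact hder t ε hε

lemma param_continuousAt (F : ℝ → ℝ → ℂ) (δ : ℝ) (hδ : 0 < δ)
    (hFc : ContinuousOn (fun p : ℝ × ℝ => F p.1 p.2) (closedBall 0 δ ×ˢ (univ : Set ℝ))) :
    ContinuousAt (fun ε => ∫ x in (-Real.pi)..Real.pi, F ε x) 0 := by
  obtain ⟨M, hM⟩ := param_bound hFc
  have h0 : (0:ℝ) ∈ closedBall (0:ℝ) δ := by simp [hδ.le]
  have := intervalIntegral.tendsto_integral_filter_of_dominated_convergence
    (μ := volume) (a := -Real.pi) (b := Real.pi) (l := nhds (0:ℝ)) (F := F)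
    (f := F 0) (fun _ => M)
    ?_ ?_ intervalIntegrable_const ?_
  · exact this
  · filter_upwards [Metric.closedBall_mem_nhds (0:ℝ) hδ] with ε hε
    exact (slice_cont hδ hFc hε).aestronglyMeasurable
  · filter_upwards [Metric.closedBall_mem_nhds (0:ℝ) hδ] with ε hε
    exact Filter.Eventually.of_forall (fun t htm => hM _ hε t (Set.uIoc_subset_uIcc htm))
  · refine Filter.Eventually.of_forall (fun t htm => ?_)
    have hc : ContinuousAt (fun p : ℝ × ℝ => F p.1 p.2) (0, t) := by
      refine hFc.continuousAt ?_
      exact prod_mem_nhds (Metric.closedBall_mem_nhds _ hδ) Filter.univ_mem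
    exact Filter.Tendsto.comp hc ((continuous_id.prodMk continuous_const).continuousAt)

end Param

/- ===================== joint smoothness plumbing ===================== -/

section Plumb

open Real MeasureTheory Set intervalIntegral Filter Metric

variable {εs : ℝ} {W : ℝ → ℝ → ℂ}

def Ff (W : ℝ → ℝ → ℂ) : ℝ × ℝ → ℂ := fun p => W p.2 p.1
def DEps (W : ℝ → ℝ → ℂ) : ℝ × ℝ → ℂ := fun p => fderiv ℝ (Ff W) p (0, 1)
def DX (W : ℝ → ℝ → ℂ) : ℝ × ℝ → ℂ := fun p => fderiv ℝ (Ff W) p (1, 0)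

lemma plumb_sect (hW : ContDiffOn ℝ 3 (Ff W) (univ ×ˢ Ioo (-εs) εs))
    {ε : ℝ} (hε : ε ∈ Ioo (-εs) εs) : ContDiff ℝ 3 (W ε) := by
  rw [← contDiffOn_univ]
  exact hW.comp ((contDiff_id.prodMk contDiff_const).contDiffOn)
    (fun x _ => ⟨trivial, hε⟩)

lemma plumb_hasDerivAt_eps (hW : ContDiffOn ℝ 3 (Ff W) (univ ×ˢ Ioo (-εs) εs))
    (x : ℝ) {ε : ℝ} (hε : ε ∈ Ioo (-εs) εs) :
    HasDerivAt (fun e => W e x) (DEps W (x, ε)) ε := by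
  have hopen : IsOpen ((univ : Set ℝ) ×ˢ Ioo (-εs) εs) := isOpen_univ.prod isOpen_Ioo
  have hmem : ((x, ε) : ℝ × ℝ) ∈ (univ : Set ℝ) ×ˢ Ioo (-εs) εs := ⟨trivial, hε⟩
  have hd : DifferentiableAt ℝ (Ff W) (x, ε) :=
    (hW.contDiffAt (hopen.mem_nhds hmem)).differentiableAt (by norm_num)
  have hline : HasDerivAt (fun e : ℝ => ((x, e) : ℝ × ℝ)) ((0 : ℝ), (1 : ℝ)) ε :=
    (hasDerivAt_const ε x).prodMk (hasDerivAt_id ε)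
  exact hd.hasFDerivAt.comp_hasDerivAt ε hline

lemma plumb_hasDerivAt_x (hW : ContDiffOn ℝ 3 (Ff W) (univ ×ˢ Ioo (-εs) εs))
    (x : ℝ) {ε : ℝ} (hε : ε ∈ Ioo (-εs) εs) :
    HasDerivAt (W ε) (DX W (x, ε)) x := by
  have hopen : IsOpen ((univ : Set ℝ) ×ˢ Ioo (-εs) εs) := isOpen_univ.prod isOpen_Ioo
  have hmem : ((x, ε) : ℝ × ℝ) ∈ (univ : Set ℝ) ×ˢ Ioo (-εs) εs := ⟨trivial, hε⟩
  have hd : DifferentiableAt ℝ (Ff W) (x, ε) :=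
    (hW.contDiffAt (hopen.mem_nhds hmem)).differentiableAt (by norm_num)
  have hline : HasDerivAt (fun y : ℝ => ((y, ε) : ℝ × ℝ)) ((1 : ℝ), (0 : ℝ)) x :=
    (hasDerivAt_id x).prodMk (hasDerivAt_const x ε)
  exact hd.hasFDerivAt.comp_hasDerivAt x hline

lemma plumb_deriv_x (hW : ContDiffOn ℝ 3 (Ff W) (univ ×ˢ Ioo (-εs) εs))
    (x : ℝ) {ε : ℝ} (hε : ε ∈ Ioo (-εs) εs) :
    deriv (W ε) x = DX W (x, ε) := (plumb_hasDerivAt_x hW x hε).deriv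

lemma plumb_contOn_DEps (hW : ContDiffOn ℝ 3 (Ff W) (univ ×ˢ Ioo (-εs) εs)) :
    ContinuousOn (DEps W) (univ ×ˢ Ioo (-εs) εs) := by
  have hopen : IsOpen ((univ : Set ℝ) ×ˢ Ioo (-εs) εs) := isOpen_univ.prod isOpen_Ioo
  have h := hW.continuousOn_fderiv_of_isOpen hopen (by norm_num)
  exact h.clm_apply continuousOn_const

lemma plumb_contOn_DX (hW : ContDiffOn ℝ 3 (Ff W) (univ ×ˢ Ioo (-εs) εs)) :
    ContinuousOn (DX W) (univ ×ˢ Ioo (-εs) εs) := by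
  have hopen : IsOpen ((univ : Set ℝ) ×ˢ Ioo (-εs) εs) := isOpen_univ.prod isOpen_Ioo
  have h := hW.continuousOn_fderiv_of_isOpen hopen (by norm_num)
  exact h.clm_apply continuousOn_const

lemma sliceX {εs : ℝ} {G : ℝ × ℝ → ℂ} (hG : ContinuousOn G (univ ×ˢ Ioo (-εs) εs))
    {ε : ℝ} (hε : ε ∈ Ioo (-εs) εs) : Continuous (fun x => G (x, ε)) := by
  rw [← continuousOn_univ]
  exact hG.comp ((continuous_id.prodMk continuous_const).continuousOn) (fun x _ => ⟨trivial, hε⟩)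

lemma swap_contOn {εs δ : ℝ} (hδε : δ < εs) {G : ℝ × ℝ → ℂ}
    (hG : ContinuousOn G (univ ×ˢ Ioo (-εs) εs)) :
    ContinuousOn (fun q : ℝ × ℝ => G (q.2, q.1)) (closedBall 0 δ ×ˢ (univ : Set ℝ)) := by
  refine hG.comp (Continuous.continuousOn (by continuity)) ?_
  rintro ⟨ε, x⟩ ⟨hε, -⟩
  refine ⟨trivial, ?_⟩
  have : |ε| ≤ δ := by simpa [Real.dist_eq] using hε
  constructor
  · nlinarith [abs_le.mp this]
  · nlinarith [abs_le.mp this]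

end Plumb
/- ===================== eigenvalue equation in complex form ===================== -/

section EigC

open Real MeasureTheory Set

lemma pair_deriv1 {f : ℝ → ℂ} (hf : ContDiff ℝ 2 f) :
    deriv (PairOf f).1 = fun x => (((deriv f) x).re : ℂ) := by
  funext x
  exact (hasDerivAt_reCoe ((hf.differentiable (by norm_num) x).hasDerivAt)).deriv

lemma pair_deriv2 {f : ℝ → ℂ} (hf : ContDiff ℝ 2 f) :
    deriv (PairOf f).2 = fun x => (((deriv f) x).im : ℂ) := by
  funext x
  exact (hasDerivAt_imCoe ((hf.differentiable (by norm_num) x).hasDerivAt)).deriv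

lemma complex_eig (d ζ μ ε lam : ℝ) (V : ℝ → ℝ) (uu vv : ℝ → ℂ)
    (hvv : ContDiff ℝ 2 vv)
    (h : ∀ x : ℝ,
      (Ltilde d ζ μ ε V uu (PairOf vv)).1 x = ((lam : ℝ) : ℂ) * (PairOf vv).1 x ∧
      (Ltilde d ζ μ ε V uu (PairOf vv)).2 x = ((lam : ℝ) : ℂ) * (PairOf vv).2 x) :
    ∀ x : ℝ, Lop d ζ μ uu vv x + Complex.I * (ε : ℂ) * (V x : ℂ) * deriv vv x
      = Complex.I * (lam : ℂ) * vv x := by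
  intro x
  obtain ⟨h1, h2⟩ := h x
  unfold Ltilde Jop Aop PairOf at h1 h2
  simp only at h1 h2
  rw [show deriv (fun x => ((vv x).re : ℂ)) = deriv (PairOf vv).1 from rfl,
      show deriv (fun x => ((vv x).im : ℂ)) = deriv (PairOf vv).2 from rfl,
      pair_deriv1 hvv, pair_deriv2 hvv] at h1 h2
  have e1 : deriv (fun y => (((deriv vv) y).re : ℂ)) x = ((deriv (deriv vv) x).re : ℂ) :=
    (hasDerivAt_reCoe ((hvv.derivC.differentiable (by norm_num) x).hasDerivAt)).deriv
  have e2 : deriv (fun y => (((deriv vv) y).im : ℂ)) x = ((deriv (deriv vv) x).im : ℂ) :=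
    (hasDerivAt_imCoe ((hvv.derivC.differentiable (by norm_num) x).hasDerivAt)).deriv
  rw [e2] at h1
  rw [e1] at h2
  simp only at h1 h2
  have h1' : -d * (deriv (deriv vv) x).im + (ζ - (uu x).re ^ 2 - 3 * (uu x).im ^ 2) * (vv x).im -
        2 * (uu x).re * (uu x).im * (vv x).re - μ * (vv x).re + ε * V x * (deriv vv x).re
      = lam * (vv x).re := by exact_mod_cast h1
  have h2' : -(-d * (deriv (deriv vv) x).re + (ζ - 3 * (uu x).re ^ 2 - (uu x).im ^ 2) * (vv x).re -
        2 * (uu x).re * (uu x).im * (vv x).im) - μ * (vv x).im + ε * V x * (deriv vv x).im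
      = lam * (vv x).im := by exact_mod_cast h2
  unfold Lop
  have hn : ‖uu x‖ * ‖uu x‖ = (uu x).re * (uu x).re + (uu x).im * (uu x).im := by
    have := Complex.sq_norm (uu x)
    rw [Complex.normSq_apply] at this
    nlinarith [this]
  apply Complex.ext
  · simp only [pow_two, Complex.add_re, Complex.sub_re, Complex.mul_re, Complex.mul_im,
      Complex.add_im, Complex.sub_im, Complex.neg_re, Complex.neg_im, Complex.I_re,
      Complex.I_im, Complex.ofReal_re, Complex.ofReal_im, Complex.conj_re, Complex.conj_im,
      Complex.re_ofNat, Complex.im_ofNat]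
    rw [hn]
    ring_nf
    ring_nf at h1' h2'
    linarith [h1', h2']
  · simp only [pow_two, Complex.add_re, Complex.sub_re, Complex.mul_re, Complex.mul_im,
      Complex.add_im, Complex.sub_im, Complex.neg_re, Complex.neg_im, Complex.I_re,
      Complex.I_im, Complex.ofReal_re, Complex.ofReal_im, Complex.conj_re, Complex.conj_im,
      Complex.re_ofNat, Complex.im_ofNat]
    rw [hn]
    ring_nf
    ring_nf at h1' h2'
    linarith [h1', h2']

end EigC

/- ===================== regularity and kernel derivative ===================== -/

section Kernel

open Real MeasureTheory Set

lemma bootstrap (d ζ μ : ℝ) (hd : d ≠ 0) (u₀ φ : ℝ → ℂ)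
    (hu : ContDiff ℝ 2 u₀) (hφ : ContDiff ℝ 2 φ)
    (hker : ∀ x, LopAdj d ζ μ u₀ φ x = 0) : ContDiff ℝ 3 φ := by
  have hg : deriv (deriv φ) = fun x =>
      (((ζ : ℂ) + Complex.I * (μ : ℂ)) * φ x - 2 * (u₀ x * (starRingEnd ℂ) (u₀ x)) * φ x
        - u₀ x ^ 2 * (starRingEnd ℂ) (φ x)) / (d : ℂ) := by
    funext x
    have h0 := hker x
    unfold LopAdj at h0
    rw [normSq_coe] at h0
    have hdc : (d : ℂ) ≠ 0 := by exact_mod_cast hd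
    field_simp
    linear_combination -h0
  have hgC : ContDiff ℝ 1 (deriv (deriv φ)) := by
    rw [hg]
    have hconjU : ContDiff ℝ 1 (fun x => (starRingEnd ℂ) (u₀ x)) :=
      contDiff_conj (hu.of_le (by norm_num))
    have hconjφ : ContDiff ℝ 1 (fun x => (starRingEnd ℂ) (φ x)) :=
      contDiff_conj (hφ.of_le (by norm_num))
    have hu1 : ContDiff ℝ 1 u₀ := hu.of_le (by norm_num)
    have hφ1 : ContDiff ℝ 1 φ := hφ.of_le (by norm_num)
    have hnum : ContDiff ℝ 1 (fun x => ((ζ : ℂ) + Complex.I * (μ : ℂ)) * φ x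
        - 2 * (u₀ x * (starRingEnd ℂ) (u₀ x)) * φ x - u₀ x ^ 2 * (starRingEnd ℂ) (φ x)) := by
      fun_prop
    exact hnum.div_const _
  have h3 : ContDiff ℝ (2+1) φ := by
    rw [contDiff_succ_iff_deriv]
    refine ⟨hφ.differentiable (by norm_num), by simp, ?_⟩
    have h2 : ContDiff ℝ (1+1) (deriv φ) := by
      rw [contDiff_succ_iff_deriv]
      exact ⟨(hφ.derivC).differentiable (by norm_num), by simp, hgC⟩
    exact h2
  exact h3

lemma lopAdj_deriv_ker (d ζ μ : ℝ) (u₀ φ : ℝ → ℂ)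
    (hu : ContDiff ℝ 2 u₀) (hφ : ContDiff ℝ 3 φ)
    (hker : ∀ x, LopAdj d ζ μ u₀ φ x = 0) :
    ∀ x, LopAdj d ζ μ u₀ (deriv φ) x
      = 2 * ((starRingEnd ℂ) (u₀ x) * deriv u₀ x + u₀ x * (starRingEnd ℂ) (deriv u₀ x)) * φ x
        + 2 * u₀ x * deriv u₀ x * (starRingEnd ℂ) (φ x) := by
  intro x
  have hdφ : HasDerivAt φ (deriv φ x) x := (hφ.differentiable (by norm_num) x).hasDerivAt
  have hdφ2 : HasDerivAt (deriv (deriv φ)) (deriv (deriv (deriv φ)) x) x :=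
    (hφ.derivC3.derivC.differentiable (by norm_num) x).hasDerivAt
  have hdu : HasDerivAt u₀ (deriv u₀ x) x := (hu.differentiable (by norm_num) x).hasDerivAt
  have hdcu : HasDerivAt (fun y => (starRingEnd ℂ) (u₀ y)) ((starRingEnd ℂ) (deriv u₀ x)) x :=
    hasDerivAt_conj hdu
  have hdcφ : HasDerivAt (fun y => (starRingEnd ℂ) (φ y)) ((starRingEnd ℂ) (deriv φ x)) x :=
    hasDerivAt_conj hdφ
  have hG : HasDerivAt (fun y => -(d:ℂ) * deriv (deriv φ) y
        + ((ζ:ℂ) + Complex.I * (μ:ℂ)) * φ y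
        - 2 * (u₀ y * (starRingEnd ℂ) (u₀ y)) * φ y
        - u₀ y ^ 2 * (starRingEnd ℂ) (φ y))
      (-(d:ℂ) * deriv (deriv (deriv φ)) x
        + ((ζ:ℂ) + Complex.I * (μ:ℂ)) * deriv φ x
        - ((2 * (deriv u₀ x * (starRingEnd ℂ) (u₀ x) + u₀ x * (starRingEnd ℂ) (deriv u₀ x)))
            * φ x + 2 * (u₀ x * (starRingEnd ℂ) (u₀ x)) * deriv φ x)
        - ((2 * u₀ x * deriv u₀ x) * (starRingEnd ℂ) (φ x)
            + u₀ x ^ 2 * (starRingEnd ℂ) (deriv φ x))) x := by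
    have t1 := hdφ2.const_mul (-(d:ℂ))
    have t2 := hdφ.const_mul ((ζ:ℂ) + Complex.I * (μ:ℂ))
    have t3 := (((hdu.mul hdcu).const_mul (2:ℂ)).mul hdφ)
    have t4a : HasDerivAt (fun y => u₀ y ^ 2) (deriv u₀ x * u₀ x + u₀ x * deriv u₀ x) x := by
      have h2 := hdu.mul hdu
      have he : (fun y => u₀ y ^ 2) = fun y => u₀ y * u₀ y := by funext y; ring
      rw [he]
      exact h2
    have t4 := t4a.mul hdcφ
    have := ((t1.add t2).sub t3).sub t4
    refine this.congr_deriv ?_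
    simp only [Pi.mul_apply]
    ring
  have hzero : (fun y => -(d:ℂ) * deriv (deriv φ) y
        + ((ζ:ℂ) + Complex.I * (μ:ℂ)) * φ y
        - 2 * (u₀ y * (starRingEnd ℂ) (u₀ y)) * φ y
        - u₀ y ^ 2 * (starRingEnd ℂ) (φ y)) = fun _ => (0:ℂ) := by
    funext y
    have h0 := hker y
    unfold LopAdj at h0
    rw [normSq_coe] at h0
    linear_combination h0
  rw [hzero] at hG
  have hD := hG.unique (hasDerivAt_const x (0:ℂ))
  unfold LopAdj
  rw [normSq_coe]
  linear_combination hD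

end Kernel
/- ===================== integrands ===================== -/

section Integrands

open Real MeasureTheory Set intervalIntegral Filter Metric

def KPf (uu vv : ℝ → ℝ → ℂ) (u₀ φ : ℝ → ℂ) (ε x : ℝ) : ℂ :=
  Ff vv (x, ε) *
    (2 * ((starRingEnd ℂ) (u₀ x) * u₀ x - (starRingEnd ℂ) (Ff uu (x, ε)) * Ff uu (x, ε))
        * (starRingEnd ℂ) (φ x)
      - ((starRingEnd ℂ) (Ff uu (x, ε)) * (starRingEnd ℂ) (Ff uu (x, ε))
          - (starRingEnd ℂ) (u₀ x) * (starRingEnd ℂ) (u₀ x)) * φ x)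

def KPd (uu vv : ℝ → ℝ → ℂ) (u₀ φ : ℝ → ℂ) (ε x : ℝ) : ℂ :=
  DEps vv (x, ε) *
    (2 * ((starRingEnd ℂ) (u₀ x) * u₀ x - (starRingEnd ℂ) (Ff uu (x, ε)) * Ff uu (x, ε))
        * (starRingEnd ℂ) (φ x)
      - ((starRingEnd ℂ) (Ff uu (x, ε)) * (starRingEnd ℂ) (Ff uu (x, ε))
          - (starRingEnd ℂ) (u₀ x) * (starRingEnd ℂ) (u₀ x)) * φ x)
  + Ff vv (x, ε) *
    (2 * (-((starRingEnd ℂ) (DEps uu (x, ε)) * Ff uu (x, ε)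
            + (starRingEnd ℂ) (Ff uu (x, ε)) * DEps uu (x, ε))) * (starRingEnd ℂ) (φ x)
      - ((starRingEnd ℂ) (DEps uu (x, ε)) * (starRingEnd ℂ) (Ff uu (x, ε))
          + (starRingEnd ℂ) (Ff uu (x, ε)) * (starRingEnd ℂ) (DEps uu (x, ε))) * φ x)

def KQf (vv : ℝ → ℝ → ℂ) (V : ℝ → ℝ) (φ : ℝ → ℂ) (ε x : ℝ) : ℂ :=
  Complex.I * ((V x : ℝ) : ℂ) * DX vv (x, ε) * (starRingEnd ℂ) (φ x)

def KRf (vv : ℝ → ℝ → ℂ) (φ : ℝ → ℂ) (ε x : ℝ) : ℂ :=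
  Complex.I * Ff vv (x, ε) * (starRingEnd ℂ) (φ x)

def KSf (uu : ℝ → ℝ → ℂ) (φ1 φ3 : ℝ → ℂ) (d ζ μ f₀ : ℝ) (ε x : ℝ) : ℂ :=
  -(d : ℂ) * Ff uu (x, ε) * (starRingEnd ℂ) (φ3 x)
    + ((ζ : ℂ) - Complex.I * (μ : ℂ)) * Ff uu (x, ε) * (starRingEnd ℂ) (φ1 x)
    - Ff uu (x, ε) * Ff uu (x, ε) * (starRingEnd ℂ) (Ff uu (x, ε)) * (starRingEnd ℂ) (φ1 x)
    + Complex.I * (f₀ : ℂ) * (starRingEnd ℂ) (φ1 x)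

def KSd (uu : ℝ → ℝ → ℂ) (φ1 φ3 : ℝ → ℂ) (d ζ μ : ℝ) (ε x : ℝ) : ℂ :=
  -(d : ℂ) * DEps uu (x, ε) * (starRingEnd ℂ) (φ3 x)
    + ((ζ : ℂ) - Complex.I * (μ : ℂ)) * DEps uu (x, ε) * (starRingEnd ℂ) (φ1 x)
    - ((DEps uu (x, ε) * Ff uu (x, ε) + Ff uu (x, ε) * DEps uu (x, ε))
          * (starRingEnd ℂ) (Ff uu (x, ε))
        + Ff uu (x, ε) * Ff uu (x, ε) * (starRingEnd ℂ) (DEps uu (x, ε)))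
      * (starRingEnd ℂ) (φ1 x)

def KTf (uu : ℝ → ℝ → ℂ) (V : ℝ → ℝ) (φ1 : ℝ → ℂ) (ε x : ℝ) : ℂ :=
  Complex.I * ((V x : ℝ) : ℂ) * DX uu (x, ε) * (starRingEnd ℂ) (φ1 x)

end Integrands

/-- **Lemma (derivative of the critical eigenvalue; Lemma 6 of the paper):**
`λ₀'(0) = - Re ∫ i V'(x) u*'(x) conj(φ*(x)) dx`. -/
theorem stmt_5
    (d ζ μ f₀ : ℝ) (hd : d ≠ 0)
    (V : ℝ → ℝ) (hVper : Function.Periodic V (2 * Real.pi)) (hV : ContDiff ℝ 1 V)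
    (ustar φstar : ℝ → ℂ)
    (hustarC : ContDiff ℝ 2 ustar) (hustarPer : Per ustar)
    (hustar : StatSol d ζ μ f₀ 0 V ustar)
    (hφC : ContDiff ℝ 2 φstar) (hφper : Per φstar)
    (hφker : ∀ x, LopAdj d ζ μ ustar φstar x = 0)
    (hnorm : (∫ x in (-Real.pi)..Real.pi,
        Complex.I * deriv ustar x * (starRingEnd ℂ) (φstar x)).re = 1)
    (εs : ℝ) (hεs : 0 < εs)
    (u v : ℝ → ℝ → ℂ) (lam₀ : ℝ → ℝ)
    (huC3 : ContDiffOn ℝ 3 (fun p : ℝ × ℝ => u p.2 p.1)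
      ((Set.univ : Set ℝ) ×ˢ Set.Ioo (-εs) εs))
    (hvC3 : ContDiffOn ℝ 3 (fun p : ℝ × ℝ => v p.2 p.1)
      ((Set.univ : Set ℝ) ×ˢ Set.Ioo (-εs) εs))
    (hlamC1 : ContDiffOn ℝ 1 lam₀ (Set.Ioo (-εs) εs))
    (huper : ∀ ε ∈ Set.Ioo (-εs) εs, Per (u ε))
    (hvper : ∀ ε ∈ Set.Ioo (-εs) εs, Per (v ε))
    (hsol : ∀ ε ∈ Set.Ioo (-εs) εs, StatSol d ζ μ f₀ ε V (u ε))
    (heig : ∀ ε ∈ Set.Ioo (-εs) εs, ∀ x : ℝ,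
      (Ltilde d ζ μ ε V (u ε) (PairOf (v ε))).1 x
          = ((lam₀ ε : ℝ) : ℂ) * (PairOf (v ε)).1 x ∧
      (Ltilde d ζ μ ε V (u ε) (PairOf (v ε))).2 x
          = ((lam₀ ε : ℝ) : ℂ) * (PairOf (v ε)).2 x)
    (hu0 : u 0 = ustar) (hlam0 : lam₀ 0 = 0) (hv0 : v 0 = deriv ustar) :
    deriv lam₀ 0 =
      -(∫ x in (-Real.pi)..Real.pi,
          Complex.I * ((deriv V x : ℝ) : ℂ) * deriv ustar x * (starRingEnd ℂ) (φstar x)).re := by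

  classical
  have hI0 : (0:ℝ) ∈ Set.Ioo (-εs) εs := ⟨by linarith, hεs⟩
  have hδpos : 0 < εs / 2 := by positivity
  have hδε : εs / 2 < εs := by linarith
  have hmemIoo : ∀ ε ∈ Metric.ball (0:ℝ) (εs/2), ε ∈ Set.Ioo (-εs) εs := by
    intro ε hε
    have h1 : |ε| < εs/2 := by simpa [Real.dist_eq] using hε
    have h2 := abs_lt.mp h1
    exact ⟨by linarith [h2.1], by linarith [h2.2]⟩
  have hUp : ContDiffOn ℝ 3 (Ff u) ((Set.univ : Set ℝ) ×ˢ Set.Ioo (-εs) εs) := huC3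
  have hVp : ContDiffOn ℝ 3 (Ff v) ((Set.univ : Set ℝ) ×ˢ Set.Ioo (-εs) εs) := hvC3
  -- regularity of φstar
  have hφ3C : ContDiff ℝ 3 φstar := bootstrap d ζ μ hd ustar φstar hustarC hφC hφker
  have hφ1C : ContDiff ℝ 2 (deriv φstar) := hφ3C.derivC3
  have hφ1per : Per (deriv φstar) := hφper.deriv'
  have cφ : Continuous φstar := hφC.continuous
  have cφ1 : Continuous (deriv φstar) := hφ1C.continuous
  have cφ3 : Continuous (deriv (deriv (deriv φstar))) := hφ1C.cont2
  have cu0 : Continuous ustar := hustarC.continuous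
  have cu0' : Continuous (deriv ustar) := (hustarC.derivC).continuous
  have cu0'' : Continuous (deriv (deriv ustar)) := hustarC.cont2
  have cV : Continuous V := hV.continuous
  have cdV : Continuous (deriv V) := hV.continuous_deriv le_rfl
  -- joint continuity of the basic fields
  have hUc : ContinuousOn (Ff u) ((Set.univ : Set ℝ) ×ˢ Set.Ioo (-εs) εs) := hUp.continuousOn
  have hVvc : ContinuousOn (Ff v) ((Set.univ : Set ℝ) ×ˢ Set.Ioo (-εs) εs) := hVp.continuousOn
  have hDUc : ContinuousOn (DEps u) ((Set.univ : Set ℝ) ×ˢ Set.Ioo (-εs) εs) :=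
    plumb_contOn_DEps hUp
  have hDVc : ContinuousOn (DEps v) ((Set.univ : Set ℝ) ×ˢ Set.Ioo (-εs) εs) :=
    plumb_contOn_DEps hVp
  have hDXUc : ContinuousOn (DX u) ((Set.univ : Set ℝ) ×ˢ Set.Ioo (-εs) εs) :=
    plumb_contOn_DX hUp
  have hDXVc : ContinuousOn (DX v) ((Set.univ : Set ℝ) ×ˢ Set.Ioo (-εs) εs) :=
    plumb_contOn_DX hVp
  have hu0p : ContinuousOn (fun p : ℝ × ℝ => ustar p.1)
      ((Set.univ : Set ℝ) ×ˢ Set.Ioo (-εs) εs) := (cu0.comp continuous_fst).continuousOn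
  have hφp : ContinuousOn (fun p : ℝ × ℝ => φstar p.1)
      ((Set.univ : Set ℝ) ×ˢ Set.Ioo (-εs) εs) := (cφ.comp continuous_fst).continuousOn
  have hφ1p : ContinuousOn (fun p : ℝ × ℝ => deriv φstar p.1)
      ((Set.univ : Set ℝ) ×ˢ Set.Ioo (-εs) εs) := (cφ1.comp continuous_fst).continuousOn
  have hφ3p : ContinuousOn (fun p : ℝ × ℝ => deriv (deriv (deriv φstar)) p.1)
      ((Set.univ : Set ℝ) ×ˢ Set.Ioo (-εs) εs) := (cφ3.comp continuous_fst).continuousOn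
  have hVxp : ContinuousOn (fun p : ℝ × ℝ => ((V p.1 : ℝ) : ℂ))
      ((Set.univ : Set ℝ) ×ˢ Set.Ioo (-εs) εs) :=
    (Complex.continuous_ofReal.comp (cV.comp continuous_fst)).continuousOn
  -- joint continuity of the integrands, in the (x, ε) ordering
  have hG_KP : ContinuousOn (fun p : ℝ × ℝ => KPf u v ustar φstar p.2 p.1)
      ((Set.univ : Set ℝ) ×ˢ Set.Ioo (-εs) εs) := by
    unfold KPf
    exact hVvc.mul
      (((continuousOn_const.mul (((hu0p.star).mul hu0p).sub ((hUc.star).mul hUc))).mul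
          hφp.star).sub
        ((((hUc.star).mul (hUc.star)).sub ((hu0p.star).mul (hu0p.star))).mul hφp))
  have hG_KPd : ContinuousOn (fun p : ℝ × ℝ => KPd u v ustar φstar p.2 p.1)
      ((Set.univ : Set ℝ) ×ˢ Set.Ioo (-εs) εs) := by
    unfold KPd
    exact (hDVc.mul
      (((continuousOn_const.mul (((hu0p.star).mul hu0p).sub ((hUc.star).mul hUc))).mul
          hφp.star).sub
        ((((hUc.star).mul (hUc.star)).sub ((hu0p.star).mul (hu0p.star))).mul hφp))).add
      (hVvc.mul
        (((continuousOn_const.mul (((hDUc.star).mul hUc).add ((hUc.star).mul hDUc)).neg).mul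
            hφp.star).sub
          ((((hDUc.star).mul (hUc.star)).add ((hUc.star).mul (hDUc.star))).mul hφp)))
  have hG_KQ : ContinuousOn (fun p : ℝ × ℝ => KQf v V φstar p.2 p.1)
      ((Set.univ : Set ℝ) ×ˢ Set.Ioo (-εs) εs) := by
    unfold KQf
    exact ((continuousOn_const.mul hVxp).mul hDXVc).mul hφp.star
  have hG_KR : ContinuousOn (fun p : ℝ × ℝ => KRf v φstar p.2 p.1)
      ((Set.univ : Set ℝ) ×ˢ Set.Ioo (-εs) εs) := by
    unfold KRf
    exact (continuousOn_const.mul hVvc).mul hφp.star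
  have hG_KS : ContinuousOn (fun p : ℝ × ℝ => KSf u (deriv φstar)
      (deriv (deriv (deriv φstar))) d ζ μ f₀ p.2 p.1)
      ((Set.univ : Set ℝ) ×ˢ Set.Ioo (-εs) εs) := by
    unfold KSf
    exact ((((continuousOn_const.mul hUc).mul hφ3p.star).add
      ((continuousOn_const.mul hUc).mul hφ1p.star)).sub
      (((hUc.mul hUc).mul hUc.star).mul hφ1p.star)).add
      (continuousOn_const.mul hφ1p.star)
  have hG_KSd : ContinuousOn (fun p : ℝ × ℝ => KSd u (deriv φstar)
      (deriv (deriv (deriv φstar))) d ζ μ p.2 p.1)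
      ((Set.univ : Set ℝ) ×ˢ Set.Ioo (-εs) εs) := by
    unfold KSd
    exact (((continuousOn_const.mul hDUc).mul hφ3p.star).add
      ((continuousOn_const.mul hDUc).mul hφ1p.star)).sub
      (((((hDUc.mul hUc).add (hUc.mul hDUc)).mul hUc.star).add
        ((hUc.mul hUc).mul hDUc.star)).mul hφ1p.star)
  have hG_KT : ContinuousOn (fun p : ℝ × ℝ => KTf u V (deriv φstar) p.2 p.1)
      ((Set.univ : Set ℝ) ×ˢ Set.Ioo (-εs) εs) := by
    unfold KTf
    exact ((continuousOn_const.mul hVxp).mul hDXUc).mul hφ1p.star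
  -- transferred to the (ε, x) ordering on the strip
  have hcKP := swap_contOn hδε hG_KP
  have hcKPd := swap_contOn hδε hG_KPd
  have hcKQ := swap_contOn hδε hG_KQ
  have hcKR := swap_contOn hδε hG_KR
  have hcKS := swap_contOn hδε hG_KS
  have hcKSd := swap_contOn hδε hG_KSd
  have hcKT := swap_contOn hδε hG_KT
  -- Step I1: the projected eigenvalue identity
  have hI1 : ∀ ε ∈ Set.Ioo (-εs) εs,
      (∫ x in (-Real.pi)..Real.pi, KPf u v ustar φstar ε x).re
        + ε * (∫ x in (-Real.pi)..Real.pi, KQf v V φstar ε x).re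
      = lam₀ ε * (∫ x in (-Real.pi)..Real.pi, KRf v φstar ε x).re := by
    intro ε hε
    have hu3 := plumb_sect hUp hε
    have hv3 := plumb_sect hVp hε
    have hv2 : ContDiff ℝ 2 (v ε) := hv3.of_le (by norm_num)
    have hE := complex_eig d ζ μ ε (lam₀ ε) V (u ε) (v ε) hv2 (heig ε hε)
    have cu : Continuous (u ε) := hu3.continuous
    have cv : Continuous (v ε) := hv2.continuous
    have cv2 : Continuous (deriv (deriv (v ε))) := hv2.cont2
    have cφc : Continuous (fun x => (starRingEnd ℂ) (φstar x)) := continuous_star.comp cφ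
    have cvc : Continuous (fun x => (starRingEnd ℂ) (v ε x)) := continuous_star.comp cv
    have cLv : Continuous (fun x => Lop d ζ μ (u ε) (v ε) x * (starRingEnd ℂ) (φstar x)) := by
      unfold Lop; fun_prop
    have cKQε : Continuous (fun x => KQf v V φstar ε x) := sliceX hG_KQ hε
    have cKRε : Continuous (fun x => KRf v φstar ε x) := sliceX hG_KR hε
    have hpoint : ∀ x, Lop d ζ μ (u ε) (v ε) x * (starRingEnd ℂ) (φstar x)
        + (ε:ℂ) * KQf v V φstar ε x
        = ((lam₀ ε : ℝ) : ℂ) * KRf v φstar ε x := by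
      intro x
      have hdx : deriv (v ε) x = DX v (x, ε) := plumb_deriv_x hVp x hε
      have hE' := hE x
      unfold KQf KRf
      simp only [Ff]
      rw [← hdx]
      linear_combination (starRingEnd ℂ) (φstar x) * hE'
    have hint : (∫ x in (-Real.pi)..Real.pi,
          Lop d ζ μ (u ε) (v ε) x * (starRingEnd ℂ) (φstar x))
        + (ε:ℂ) * (∫ x in (-Real.pi)..Real.pi, KQf v V φstar ε x)
        = ((lam₀ ε : ℝ) : ℂ) * (∫ x in (-Real.pi)..Real.pi, KRf v φstar ε x) := by
      rw [← intervalIntegral.integral_const_mul, ← intervalIntegral.integral_const_mul,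
        ← intervalIntegral.integral_add (cLv.intervalIntegrable _ _)
          ((continuous_const.fun_mul cKQε).intervalIntegrable _ _)]
      exact intervalIntegral.integral_congr (fun x _ => hpoint x)
    have hadj := adjoint_re d ζ μ (u ε) (v ε) φstar cu hv2 hφC (hvper ε hε) hφper
    have hKP : (∫ x in (-Real.pi)..Real.pi,
          v ε x * (starRingEnd ℂ) (LopAdj d ζ μ (u ε) φstar x))
        = ∫ x in (-Real.pi)..Real.pi, KPf u v ustar φstar ε x := by
      apply intervalIntegral.integral_congr
      intro x _
      show v ε x * (starRingEnd ℂ) (LopAdj d ζ μ (u ε) φstar x) = KPf u v ustar φstar ε x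
      have h0 := hφker x
      have hLA : LopAdj d ζ μ (u ε) φstar x
          = 2 * (ustar x * (starRingEnd ℂ) (ustar x) - u ε x * (starRingEnd ℂ) (u ε x))
              * φstar x
            - (u ε x * u ε x - ustar x * ustar x) * (starRingEnd ℂ) (φstar x) := by
        unfold LopAdj at h0 ⊢
        rw [normSq_coe] at h0 ⊢
        linear_combination h0
      rw [hLA]
      unfold KPf
      simp only [Ff, map_sub, map_mul, map_add, map_ofNat, Complex.conj_conj]
    have hre := congrArg Complex.re hint
    rw [Complex.add_re, Complex.re_ofReal_mul, Complex.re_ofReal_mul, hadj, hKP] at hre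
    exact hre
  -- Step I2: the projected stationary identity
  have hI2 : ∀ ε ∈ Set.Ioo (-εs) εs,
      (∫ x in (-Real.pi)..Real.pi,
        KSf u (deriv φstar) (deriv (deriv (deriv φstar))) d ζ μ f₀ ε x)
        + (ε : ℂ) * (∫ x in (-Real.pi)..Real.pi, KTf u V (deriv φstar) ε x) = 0 := by
    intro ε hε
    obtain ⟨hsC2, hsP2, hsE2⟩ := hsol ε hε
    have hu3 := plumb_sect hUp hε
    have hu2 : ContDiff ℝ 2 (u ε) := hu3.of_le (by norm_num)
    have cu : Continuous (u ε) := hu2.continuous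
    have cu2 : Continuous (deriv (deriv (u ε))) := hu2.cont2
    have cφ1c : Continuous (fun x => (starRingEnd ℂ) (deriv φstar x)) := continuous_star.comp cφ1
    have cφ3c : Continuous (fun x => (starRingEnd ℂ) (deriv (deriv (deriv φstar)) x)) :=
      continuous_star.comp cφ3
    have cuc : Continuous (fun x => (starRingEnd ℂ) (u ε x)) := continuous_star.comp cu
    have cKTε : Continuous (fun x => KTf u V (deriv φstar) ε x) := sliceX hG_KT hε
    have crest : Continuous (fun x => ((ζ:ℂ) - Complex.I * (μ:ℂ)) * u ε x
        * (starRingEnd ℂ) (deriv φstar x)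
        - u ε x * u ε x * (starRingEnd ℂ) (u ε x) * (starRingEnd ℂ) (deriv φstar x)
        + Complex.I * (f₀:ℂ) * (starRingEnd ℂ) (deriv φstar x)) := by fun_prop
    have ct1 : Continuous (fun x => -(d:ℂ) * (deriv (deriv (u ε)) x
        * (starRingEnd ℂ) (deriv φstar x))) := by fun_prop
    have ct1' : Continuous (fun x => deriv (deriv (u ε)) x
        * (starRingEnd ℂ) (deriv φstar x)) := by fun_prop
    have hpoint : ∀ x, (-(d:ℂ) * (deriv (deriv (u ε)) x * (starRingEnd ℂ) (deriv φstar x))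
        + (((ζ:ℂ) - Complex.I * (μ:ℂ)) * u ε x * (starRingEnd ℂ) (deriv φstar x)
          - u ε x * u ε x * (starRingEnd ℂ) (u ε x) * (starRingEnd ℂ) (deriv φstar x)
          + Complex.I * (f₀:ℂ) * (starRingEnd ℂ) (deriv φstar x)))
        + (ε:ℂ) * KTf u V (deriv φstar) ε x = 0 := by
      intro x
      have h0 := hsE2 x
      rw [normSq_coe] at h0
      have hdx : deriv (u ε) x = DX u (x, ε) := plumb_deriv_x hUp x hε
      unfold KTf
      rw [← hdx]
      linear_combination (starRingEnd ℂ) (deriv φstar x) * h0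
    have hint0 : (∫ x in (-Real.pi)..Real.pi,
        ((-(d:ℂ) * (deriv (deriv (u ε)) x * (starRingEnd ℂ) (deriv φstar x))
        + (((ζ:ℂ) - Complex.I * (μ:ℂ)) * u ε x * (starRingEnd ℂ) (deriv φstar x)
          - u ε x * u ε x * (starRingEnd ℂ) (u ε x) * (starRingEnd ℂ) (deriv φstar x)
          + Complex.I * (f₀:ℂ) * (starRingEnd ℂ) (deriv φstar x)))
        + (ε:ℂ) * KTf u V (deriv φstar) ε x)) = 0 := by
      rw [intervalIntegral.integral_congr (g := fun _ => (0:ℂ)) (fun x _ => hpoint x)]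
      simp
    rw [intervalIntegral.integral_add
        ((ct1.fun_add crest).intervalIntegrable _ _)
        ((continuous_const.fun_mul cKTε).intervalIntegrable _ _),
      intervalIntegral.integral_add (ct1.intervalIntegrable _ _) (crest.intervalIntegrable _ _),
      intervalIntegral.integral_const_mul, intervalIntegral.integral_const_mul] at hint0
    have hibp : ∫ x in (-Real.pi)..Real.pi,
        deriv (deriv (u ε)) x * (starRingEnd ℂ) (deriv φstar x)
        = ∫ x in (-Real.pi)..Real.pi,
          u ε x * (starRingEnd ℂ) (deriv (deriv (deriv φstar)) x) := by
      have h := ibp2_periodic (u ε) (fun y => (starRingEnd ℂ) (deriv φstar y)) hu2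
        (contDiff_conj hφ1C) (huper ε hε) hφ1per.conj'
      rw [deriv2_conj_fun hφ1C] at h
      exact h
    rw [hibp] at hint0
    have hKSF : (∫ x in (-Real.pi)..Real.pi,
        KSf u (deriv φstar) (deriv (deriv (deriv φstar))) d ζ μ f₀ ε x)
        = -(d:ℂ) * (∫ x in (-Real.pi)..Real.pi,
            u ε x * (starRingEnd ℂ) (deriv (deriv (deriv φstar)) x))
          + (∫ x in (-Real.pi)..Real.pi, (((ζ:ℂ) - Complex.I * (μ:ℂ)) * u ε x
              * (starRingEnd ℂ) (deriv φstar x)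
            - u ε x * u ε x * (starRingEnd ℂ) (u ε x) * (starRingEnd ℂ) (deriv φstar x)
            + Complex.I * (f₀:ℂ) * (starRingEnd ℂ) (deriv φstar x))) := by
      have cu3 : Continuous (fun x => u ε x * (starRingEnd ℂ) (deriv (deriv (deriv φstar)) x)) := by
        fun_prop
      rw [← intervalIntegral.integral_const_mul,
        ← intervalIntegral.integral_add ((continuous_const.fun_mul cu3).intervalIntegrable _ _)
          (crest.intervalIntegrable _ _)]
      apply intervalIntegral.integral_congr
      intro x _
      unfold KSf
      simp only [Ff]
      ring
    rw [hKSF]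
    linear_combination hint0
  -- Step D: differentiability of the parametric integrals at 0
  have hKP' : HasDerivAt (fun ε => ∫ x in (-Real.pi)..Real.pi, KPf u v ustar φstar ε x)
      (∫ x in (-Real.pi)..Real.pi, KPd u v ustar φstar 0 x) 0 := by
    refine param_hasDerivAt _ _ (εs/2) hδpos hcKP hcKPd ?_
    intro x ε hεb
    have hε := hmemIoo ε hεb
    have hu' := plumb_hasDerivAt_eps hUp x hε
    have hv' := plumb_hasDerivAt_eps hVp x hε
    have hcu' := hasDerivAt_conj hu'
    have inner := ((((hasDerivAt_const ε ((starRingEnd ℂ) (ustar x) * ustar x)).sub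
        (hcu'.mul hu')).const_mul (2:ℂ)).mul_const ((starRingEnd ℂ) (φstar x))).sub
      (((hcu'.mul hcu').sub
        (hasDerivAt_const ε ((starRingEnd ℂ) (ustar x) * (starRingEnd ℂ) (ustar x)))).mul_const
        (φstar x))
    have total := hv'.mul inner
    refine total.congr_deriv ?_
    unfold KPd
    simp only [Ff, Pi.mul_apply, Pi.sub_apply, Pi.pow_apply]
    ring
  have hKS' : HasDerivAt (fun ε => ∫ x in (-Real.pi)..Real.pi,
        KSf u (deriv φstar) (deriv (deriv (deriv φstar))) d ζ μ f₀ ε x)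
      (∫ x in (-Real.pi)..Real.pi,
        KSd u (deriv φstar) (deriv (deriv (deriv φstar))) d ζ μ 0 x) 0 := by
    refine param_hasDerivAt _ _ (εs/2) hδpos hcKS hcKSd ?_
    intro x ε hεb
    have hε := hmemIoo ε hεb
    have hu' := plumb_hasDerivAt_eps hUp x hε
    have hcu' := hasDerivAt_conj hu'
    have total := ((((hu'.const_mul (-(d:ℂ))).mul_const
        ((starRingEnd ℂ) (deriv (deriv (deriv φstar)) x))).add
      ((hu'.const_mul ((ζ:ℂ) - Complex.I * (μ:ℂ))).mul_const
        ((starRingEnd ℂ) (deriv φstar x)))).sub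
      ((((hu'.mul hu').mul hcu').mul_const ((starRingEnd ℂ) (deriv φstar x))))).add
      (hasDerivAt_const ε (Complex.I * (f₀:ℂ) * (starRingEnd ℂ) (deriv φstar x)))
    refine total.congr_deriv ?_
    unfold KSd
    simp only [Ff, Pi.mul_apply]
    ring
  -- Step D': continuity of the auxiliary parametric integrals at 0
  have hQcont : ContinuousAt
      (fun ε => (∫ x in (-Real.pi)..Real.pi, KQf v V φstar ε x).re) 0 :=
    Complex.continuous_re.continuousAt.comp (param_continuousAt _ (εs/2) hδpos hcKQ)
  have hRcont : ContinuousAt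
      (fun ε => (∫ x in (-Real.pi)..Real.pi, KRf v φstar ε x).re) 0 :=
    Complex.continuous_re.continuousAt.comp (param_continuousAt _ (εs/2) hδpos hcKR)
  have hTcont : ContinuousAt
      (fun ε => (∫ x in (-Real.pi)..Real.pi, KTf u V (deriv φstar) ε x).re) 0 :=
    Complex.continuous_re.continuousAt.comp (param_continuousAt _ (εs/2) hδpos hcKT)
  -- Step E: identify derivatives at 0
  have hlamD : HasDerivAt lam₀ (deriv lam₀ 0) 0 :=
    ((hlamC1.contDiffAt (isOpen_Ioo.mem_nhds hI0)).differentiableAt (by norm_num)).hasDerivAt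
  have hR0 : (∫ x in (-Real.pi)..Real.pi, KRf v φstar 0 x).re = 1 := by
    have : ∫ x in (-Real.pi)..Real.pi, KRf v φstar 0 x
        = ∫ x in (-Real.pi)..Real.pi, Complex.I * deriv ustar x * (starRingEnd ℂ) (φstar x) := by
      apply intervalIntegral.integral_congr
      intro x _
      unfold KRf Ff
      simp only [hv0]
    rw [this, hnorm]
  have hE1 : (∫ x in (-Real.pi)..Real.pi, KPd u v ustar φstar 0 x).re
      + (∫ x in (-Real.pi)..Real.pi, KQf v V φstar 0 x).re
      = deriv lam₀ 0 := by
    have hLHS : HasDerivAt (fun ε => (∫ x in (-Real.pi)..Real.pi, KPf u v ustar φstar ε x).re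
        + ε * (∫ x in (-Real.pi)..Real.pi, KQf v V φstar ε x).re)
        ((∫ x in (-Real.pi)..Real.pi, KPd u v ustar φstar 0 x).re
          + 1 * (∫ x in (-Real.pi)..Real.pi, KQf v V φstar 0 x).re) 0 := by
      exact (Complex.reCLM.hasFDerivAt.comp_hasDerivAt 0 hKP').add
        (hasDerivAt_mul_cont (hasDerivAt_id 0) rfl hQcont)
    have hRHS : HasDerivAt (fun ε => lam₀ ε
        * (∫ x in (-Real.pi)..Real.pi, KRf v φstar ε x).re)
        (deriv lam₀ 0 * (∫ x in (-Real.pi)..Real.pi, KRf v φstar 0 x).re) 0 :=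
      hasDerivAt_mul_cont hlamD hlam0 hRcont
    have hev : (fun ε => lam₀ ε * (∫ x in (-Real.pi)..Real.pi, KRf v φstar ε x).re)
        =ᶠ[nhds (0:ℝ)] (fun ε => (∫ x in (-Real.pi)..Real.pi, KPf u v ustar φstar ε x).re
          + ε * (∫ x in (-Real.pi)..Real.pi, KQf v V φstar ε x).re) := by
      filter_upwards [Ioo_mem_nhds hI0.1 hI0.2] with ε hε
      exact (hI1 ε hε).symm
    have := (hLHS.congr_of_eventuallyEq hev).unique hRHS
    rw [hR0] at this
    linarith [this]
  have hE2 : (∫ x in (-Real.pi)..Real.pi,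
        KSd u (deriv φstar) (deriv (deriv (deriv φstar))) d ζ μ 0 x).re
      + (∫ x in (-Real.pi)..Real.pi, KTf u V (deriv φstar) 0 x).re = 0 := by
    have hLHS : HasDerivAt (fun ε => (∫ x in (-Real.pi)..Real.pi,
          KSf u (deriv φstar) (deriv (deriv (deriv φstar))) d ζ μ f₀ ε x).re
        + ε * (∫ x in (-Real.pi)..Real.pi, KTf u V (deriv φstar) ε x).re)
        ((∫ x in (-Real.pi)..Real.pi,
            KSd u (deriv φstar) (deriv (deriv (deriv φstar))) d ζ μ 0 x).re
          + 1 * (∫ x in (-Real.pi)..Real.pi, KTf u V (deriv φstar) 0 x).re) 0 := by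
      exact (Complex.reCLM.hasFDerivAt.comp_hasDerivAt 0 hKS').add
        (hasDerivAt_mul_cont (hasDerivAt_id 0) rfl hTcont)
    have hev : (fun _ : ℝ => (0:ℝ)) =ᶠ[nhds (0:ℝ)]
        (fun ε => (∫ x in (-Real.pi)..Real.pi,
          KSf u (deriv φstar) (deriv (deriv (deriv φstar))) d ζ μ f₀ ε x).re
        + ε * (∫ x in (-Real.pi)..Real.pi, KTf u V (deriv φstar) ε x).re) := by
      filter_upwards [Ioo_mem_nhds hI0.1 hI0.2] with ε hε
      have := congrArg Complex.re (hI2 ε hε)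
      simp only [Complex.add_re, Complex.zero_re] at this
      rw [show ((ε:ℂ) * ∫ x in (-Real.pi)..Real.pi, KTf u V (deriv φstar) ε x).re
        = ε * (∫ x in (-Real.pi)..Real.pi, KTf u V (deriv φstar) ε x).re from
        Complex.re_ofReal_mul ε _] at this
      exact this.symm
    have := (hLHS.congr_of_eventuallyEq hev).unique (hasDerivAt_const 0 (0:ℝ))
    linarith [this]
  -- Step F: pointwise identifications at ε = 0
  have hDIF := lopAdj_deriv_ker d ζ μ ustar φstar hustarC hφ3C hφker
  have hSd0 : (∫ x in (-Real.pi)..Real.pi,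
        KSd u (deriv φstar) (deriv (deriv (deriv φstar))) d ζ μ 0 x).re
      = (∫ x in (-Real.pi)..Real.pi,
        DEps u (x, 0) * (starRingEnd ℂ) (LopAdj d ζ μ ustar (deriv φstar) x)).re := by
    have h0cb : (0:ℝ) ∈ Metric.closedBall (0:ℝ) (εs/2) := by simp [hδpos.le]
    have cKSd0 : Continuous (KSd u (deriv φstar) (deriv (deriv (deriv φstar))) d ζ μ 0) :=
      slice_cont hδpos hcKSd h0cb
    have cDU0 : Continuous (fun x => DEps u (x, 0)) := sliceX hDUc hI0
    have cφ1c : Continuous (fun x => (starRingEnd ℂ) (deriv φstar x)) := continuous_star.comp cφ1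
    have cLopAdj : Continuous (LopAdj d ζ μ ustar (deriv φstar)) := by
      unfold LopAdj; fun_prop
    have cRHS : Continuous (fun x => DEps u (x, 0)
        * (starRingEnd ℂ) (LopAdj d ζ μ ustar (deriv φstar) x)) :=
      cDU0.mul (continuous_star.comp cLopAdj)
    rw [re_integral _ (cKSd0.intervalIntegrable _ _), re_integral _ (cRHS.intervalIntegrable _ _)]
    apply intervalIntegral.integral_congr
    intro x _
    show (KSd u (deriv φstar) (deriv (deriv (deriv φstar))) d ζ μ 0 x).re
      = (DEps u (x, 0) * (starRingEnd ℂ) (LopAdj d ζ μ ustar (deriv φstar) x)).re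
    have hx : KSd u (deriv φstar) (deriv (deriv (deriv φstar))) d ζ μ 0 x
        = DEps u (x, 0) * (starRingEnd ℂ) (LopAdj d ζ μ ustar (deriv φstar) x)
          + ((starRingEnd ℂ) (ustar x * ustar x * (starRingEnd ℂ) (DEps u (x, 0))
              * (starRingEnd ℂ) (deriv φstar x))
            - ustar x * ustar x * (starRingEnd ℂ) (DEps u (x, 0))
              * (starRingEnd ℂ) (deriv φstar x)) := by
      unfold KSd LopAdj
      rw [normSq_coe]
      simp only [Ff, hu0]
      simp only [map_add, map_sub, map_mul, map_neg, map_ofNat, Complex.conj_conj,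
        Complex.conj_ofReal, Complex.conj_I, map_pow]
      ring
    rw [hx, Complex.add_re, conj_sub_re, add_zero]
  have hPd0 : (∫ x in (-Real.pi)..Real.pi, KPd u v ustar φstar 0 x).re
      = - (∫ x in (-Real.pi)..Real.pi,
        DEps u (x, 0) * (starRingEnd ℂ) (LopAdj d ζ μ ustar (deriv φstar) x)).re := by
    have h0cb : (0:ℝ) ∈ Metric.closedBall (0:ℝ) (εs/2) := by simp [hδpos.le]
    have cKPd0 : Continuous (KPd u v ustar φstar 0) := slice_cont hδpos hcKPd h0cb
    have cDU0 : Continuous (fun x => DEps u (x, 0)) := sliceX hDUc hI0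
    have cφ1c : Continuous (fun x => (starRingEnd ℂ) (deriv φstar x)) := continuous_star.comp cφ1
    have cLopAdj : Continuous (LopAdj d ζ μ ustar (deriv φstar)) := by
      unfold LopAdj; fun_prop
    have cRHS : Continuous (fun x => DEps u (x, 0)
        * (starRingEnd ℂ) (LopAdj d ζ μ ustar (deriv φstar) x)) :=
      cDU0.mul (continuous_star.comp cLopAdj)
    rw [re_integral _ (cKPd0.intervalIntegrable _ _),
      re_integral _ (cRHS.intervalIntegrable _ _), ← intervalIntegral.integral_neg]
    apply intervalIntegral.integral_congr
    intro x _
    show (KPd u v ustar φstar 0 x).re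
      = -(DEps u (x, 0) * (starRingEnd ℂ) (LopAdj d ζ μ ustar (deriv φstar) x)).re
    have hx : KPd u v ustar φstar 0 x
        + DEps u (x, 0) * (starRingEnd ℂ) (LopAdj d ζ μ ustar (deriv φstar) x)
        = ((starRingEnd ℂ) (2 * (starRingEnd ℂ) (DEps u (x, 0)) * ustar x * deriv ustar x
              * (starRingEnd ℂ) (φstar x))
          - 2 * (starRingEnd ℂ) (DEps u (x, 0)) * ustar x * deriv ustar x
              * (starRingEnd ℂ) (φstar x))
        + ((starRingEnd ℂ) (2 * (starRingEnd ℂ) (DEps u (x, 0)) * (starRingEnd ℂ) (ustar x)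
              * deriv ustar x * φstar x)
          - 2 * (starRingEnd ℂ) (DEps u (x, 0)) * (starRingEnd ℂ) (ustar x)
              * deriv ustar x * φstar x) := by
      rw [hDIF x]
      unfold KPd
      simp only [Ff, hu0, hv0]
      simp only [map_add, map_sub, map_mul, map_neg, map_ofNat, Complex.conj_conj,
        Complex.conj_ofReal, Complex.conj_I, map_pow]
      ring
    have hre := congrArg Complex.re hx
    simp only [Complex.add_re, conj_sub_re, add_zero] at hre
    have : (KPd u v ustar φstar 0 x).re
        + (DEps u (x, 0) * (starRingEnd ℂ) (LopAdj d ζ μ ustar (deriv φstar) x)).re = 0 := by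
      rw [← Complex.add_re]; rw [← Complex.add_re] at hre; exact hre
    linarith [this]
  have hT0 : (∫ x in (-Real.pi)..Real.pi, KTf u V (deriv φstar) 0 x).re
      = (∫ x in (-Real.pi)..Real.pi, Complex.I * ((V x : ℝ) : ℂ) * deriv ustar x
          * (starRingEnd ℂ) (deriv φstar x)).re := by
    apply congrArg
    apply intervalIntegral.integral_congr
    intro x _
    unfold KTf
    rw [← plumb_deriv_x hUp x hI0, hu0]
  have hQ0 : (∫ x in (-Real.pi)..Real.pi, KQf v V φstar 0 x).re
      = (∫ x in (-Real.pi)..Real.pi, Complex.I * ((V x : ℝ) : ℂ) * deriv (deriv ustar) x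
          * (starRingEnd ℂ) (φstar x)).re := by
    apply congrArg
    apply intervalIntegral.integral_congr
    intro x _
    unfold KQf
    rw [← plumb_deriv_x hVp x hI0, hv0]
  -- Step G: integration by parts for the potential term
  have hIBP : (∫ x in (-Real.pi)..Real.pi, Complex.I * ((deriv V x : ℝ) : ℂ) * deriv ustar x
        * (starRingEnd ℂ) (φstar x)).re
      + (∫ x in (-Real.pi)..Real.pi, Complex.I * ((V x : ℝ) : ℂ) * deriv (deriv ustar) x
        * (starRingEnd ℂ) (φstar x)).re
      + (∫ x in (-Real.pi)..Real.pi, Complex.I * ((V x : ℝ) : ℂ) * deriv ustar x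
        * (starRingEnd ℂ) (deriv φstar x)).re = 0 := by
    have cφc : Continuous (fun x => (starRingEnd ℂ) (φstar x)) := continuous_star.comp cφ
    have cφ1c : Continuous (fun x => (starRingEnd ℂ) (deriv φstar x)) := continuous_star.comp cφ1
    have hVC : ContDiff ℝ 1 (fun x => ((V x : ℝ) : ℂ)) := Complex.ofRealCLM.contDiff.comp hV
    have hu'C : ContDiff ℝ 1 (deriv ustar) := hustarC.derivC
    have hφcC : ContDiff ℝ 1 (fun x => (starRingEnd ℂ) (φstar x)) :=
      contDiff_conj (hφC.of_le (by norm_num))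
    have hFC1 : ContDiff ℝ 1 (fun x => Complex.I * ((V x : ℝ) : ℂ) * deriv ustar x
        * (starRingEnd ℂ) (φstar x)) := by fun_prop
    have hFper : Per (fun x => Complex.I * ((V x : ℝ) : ℂ) * deriv ustar x
        * (starRingEnd ℂ) (φstar x)) := by
      intro x
      simp only
      rw [hVper x, hustarPer.deriv' x, hφper x]
    have hFd : ∀ x, HasDerivAt (fun y => Complex.I * ((V y : ℝ) : ℂ) * deriv ustar y
        * (starRingEnd ℂ) (φstar y))
        (Complex.I * ((deriv V x : ℝ) : ℂ) * deriv ustar x * (starRingEnd ℂ) (φstar x)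
          + Complex.I * ((V x : ℝ) : ℂ) * deriv (deriv ustar) x * (starRingEnd ℂ) (φstar x)
          + Complex.I * ((V x : ℝ) : ℂ) * deriv ustar x * (starRingEnd ℂ) (deriv φstar x)) x := by
      intro x
      have hVd : HasDerivAt (fun y => ((V y : ℝ) : ℂ)) ((deriv V x : ℝ) : ℂ) x :=
        ((hV.differentiable (by norm_num) x).hasDerivAt).ofReal_comp
      have hu'd : HasDerivAt (deriv ustar) (deriv (deriv ustar) x) x :=
        (hustarC.derivC.differentiable (by norm_num) x).hasDerivAt
      have hcφd : HasDerivAt (fun y => (starRingEnd ℂ) (φstar y))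
          ((starRingEnd ℂ) (deriv φstar x)) x :=
        hasDerivAt_conj ((hφC.differentiable (by norm_num) x).hasDerivAt)
      have := ((hVd.const_mul Complex.I).mul hu'd).mul hcφd
      refine this.congr_deriv ?_
      simp only [Pi.mul_apply]
      ring
    have hz := integral_deriv_periodic _ hFC1 hFper
    have hsum : ∫ x in (-Real.pi)..Real.pi,
        deriv (fun y => Complex.I * ((V y : ℝ) : ℂ) * deriv ustar y
          * (starRingEnd ℂ) (φstar y)) x
        = (∫ x in (-Real.pi)..Real.pi, Complex.I * ((deriv V x : ℝ) : ℂ) * deriv ustar x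
            * (starRingEnd ℂ) (φstar x))
          + (∫ x in (-Real.pi)..Real.pi, Complex.I * ((V x : ℝ) : ℂ) * deriv (deriv ustar) x
            * (starRingEnd ℂ) (φstar x))
          + (∫ x in (-Real.pi)..Real.pi, Complex.I * ((V x : ℝ) : ℂ) * deriv ustar x
            * (starRingEnd ℂ) (deriv φstar x)) := by
      have c1 : Continuous (fun x => Complex.I * ((deriv V x : ℝ) : ℂ) * deriv ustar x
          * (starRingEnd ℂ) (φstar x)) := by fun_prop
      have c2 : Continuous (fun x => Complex.I * ((V x : ℝ) : ℂ) * deriv (deriv ustar) x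
          * (starRingEnd ℂ) (φstar x)) := by fun_prop
      have c3 : Continuous (fun x => Complex.I * ((V x : ℝ) : ℂ) * deriv ustar x
          * (starRingEnd ℂ) (deriv φstar x)) := by fun_prop
      rw [← intervalIntegral.integral_add (c1.intervalIntegrable _ _)
          (c2.intervalIntegrable _ _),
        ← intervalIntegral.integral_add ((c1.fun_add c2).intervalIntegrable _ _)
          (c3.intervalIntegrable _ _)]
      apply intervalIntegral.integral_congr
      intro x _
      exact (hFd x).deriv
    rw [hz] at hsum
    have := congrArg Complex.re hsum.symm
    simp only [Complex.add_re, Complex.zero_re] at this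
    linarith [this]
  -- conclusion
  have e1 := hE1
  rw [hPd0, hQ0] at e1
  have e2 := hE2
  rw [hSd0, hT0] at e2
  linarith [hIBP, e1, e2]
end
end

section
/- Let d ≠ 0, ζ, f₀ ∈ ℝ, μ ≠ 0, ε ∈ ℝ, and let V : ℝ → ℝ be 2π-periodic and continuous. If u : ℝ → ℂ is a twice continuously differentiable 2π-periodic function satisfying −d u''(x) + i ε V(x) u'(x) + (ζ − iμ) u(x) − |u(x)|² u(x) + i f₀ = 0 for all x ∈ ℝ, then ∫_{−π}^{π} ( u'(x) conj(u(x)) − conj(u'(x)) u(x) ) dx = 0, equivalently Im ∫_{−π}^{π} u'(x) conj(u(x)) dx = 0. -/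
noncomputable section

open Real MeasureTheory Set

/-- **Remark (integral constraint for stationary solutions).** -/
theorem stmt_7
    (d ζ μ f₀ ε : ℝ) (hd : d ≠ 0) (hμ : μ ≠ 0)
    (V : ℝ → ℝ) (hVper : Function.Periodic V (2 * Real.pi)) (hV : Continuous V)
    (u : ℝ → ℂ) (hu : StatSol d ζ μ f₀ ε V u) :
    (∫ x in (-Real.pi)..Real.pi,
        (deriv u x * (starRingEnd ℂ) (u x) - (starRingEnd ℂ) (deriv u x) * u x)) = 0 ∧
    (∫ x in (-Real.pi)..Real.pi, deriv u x * (starRingEnd ℂ) (u x)).im = 0 := by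
  obtain ⟨hC2, hper, heq⟩ := hu
  have hdiff : Differentiable ℝ u := (hC2.of_le (show (1 : WithTop ℕ∞) ≤ 2 by norm_num)).differentiable one_ne_zero
  have hder1 : ContDiff ℝ 1 (deriv u) := by
    have h := ContDiff.iterate_deriv' 1 1 (f := u) (by exact_mod_cast hC2)
    simpa using h
  have hdiff' : Differentiable ℝ (deriv u) := hder1.differentiable one_ne_zero
  have hcu : Continuous u := hdiff.continuous
  have hcu' : Continuous (deriv u) := hdiff'.continuous
  have hperd : ∀ x, deriv u (x + 2 * Real.pi) = deriv u x := by
    intro x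
    have hfun : (fun y => u (y + 2 * Real.pi)) = u := funext hper
    rw [← deriv_comp_add_const, hfun]
  -- the antiderivative
  set F : ℝ → ℂ := fun y =>
      -(d : ℂ) / 2 * (deriv u y * (starRingEnd ℂ) (deriv u y))
      + (ζ : ℂ) / 2 * (u y * (starRingEnd ℂ) (u y))
      - (1 / 4 : ℂ) * ((u y * (starRingEnd ℂ) (u y)) * (u y * (starRingEnd ℂ) (u y)))
      + Complex.I * (f₀ : ℂ) / 2 * ((starRingEnd ℂ) (u y) - u y) with hF
  have hFderiv : ∀ x : ℝ,
      HasDerivAt F (((μ * (deriv u x * (starRingEnd ℂ) (u x)).im : ℝ) : ℂ)) x := by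
    intro x
    have ha : HasDerivAt u (deriv u x) x := (hdiff x).hasDerivAt
    have hb : HasDerivAt (deriv u) (deriv (deriv u) x) x := (hdiff' x).hasDerivAt
    have ha' : HasDerivAt (fun y => (starRingEnd ℂ) (u y)) ((starRingEnd ℂ) (deriv u x)) x := by
      simpa only [starRingEnd_apply] using ha.star
    have hb' : HasDerivAt (fun y => (starRingEnd ℂ) (deriv u y))
        ((starRingEnd ℂ) (deriv (deriv u) x)) x := by
      simpa only [starRingEnd_apply] using hb.star
    have H := ((((hb.mul hb').const_mul (-(d : ℂ) / 2)).add
        ((ha.mul ha').const_mul ((ζ : ℂ) / 2))).sub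
        (((ha.mul ha').mul (ha.mul ha')).const_mul (1 / 4 : ℂ))).add
        ((ha'.sub ha).const_mul (Complex.I * (f₀ : ℂ) / 2))
    refine H.congr_deriv ?_
    symm
    simp only [Pi.mul_apply]
    have h1 := heq x
    have h2 := congrArg (starRingEnd ℂ) (heq x)
    simp only [map_add, map_sub, map_mul, map_neg, map_zero, Complex.conj_ofReal,
      Complex.conj_I, Complex.conj_conj] at h2
    have h3 : ((‖u x‖ ^ 2 : ℝ) : ℂ) = u x * (starRingEnd ℂ) (u x) := by
      rw [Complex.mul_conj]
      norm_cast
      simp [Complex.sq_norm]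
    rw [h3] at h1 h2
    have h4 := Complex.sub_conj (deriv u x * (starRingEnd ℂ) (u x))
    simp only [map_mul, Complex.conj_conj] at h4
    push_cast at h4 ⊢
    linear_combination (-(starRingEnd ℂ) (deriv u x) / 2 : ℂ) * h1 + (-(deriv u x) / 2 : ℂ) * h2
      + (Complex.I * (μ : ℂ) / 2) * h4
      + ((μ : ℂ) * ((deriv u x * (starRingEnd ℂ) (u x)).im : ℂ)) * Complex.I_sq
  have hcw : Continuous fun x => deriv u x * (starRingEnd ℂ) (u x) := by
    simp only [starRingEnd_apply]
    exact hcu'.mul hcu.star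
  have hint : IntervalIntegrable
      (fun x => ((μ * (deriv u x * (starRingEnd ℂ) (u x)).im : ℝ) : ℂ))
      MeasureTheory.volume (-Real.pi) Real.pi := by
    exact (Complex.continuous_ofReal.comp
      (continuous_const.mul (Complex.continuous_im.comp hcw))).intervalIntegrable _ _
  have key0 : (∫ x in (-Real.pi)..Real.pi,
      ((μ * (deriv u x * (starRingEnd ℂ) (u x)).im : ℝ) : ℂ)) = F Real.pi - F (-Real.pi) :=
    intervalIntegral.integral_eq_sub_of_hasDerivAt (fun x _ => hFderiv x) hint
  have e1 : u Real.pi = u (-Real.pi) := by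
    have h := hper (-Real.pi)
    rwa [show -Real.pi + 2 * Real.pi = Real.pi by ring] at h
  have e2 : deriv u Real.pi = deriv u (-Real.pi) := by
    have h := hperd (-Real.pi)
    rwa [show -Real.pi + 2 * Real.pi = Real.pi by ring] at h
  have key0' : (∫ x in (-Real.pi)..Real.pi,
      ((μ * (deriv u x * (starRingEnd ℂ) (u x)).im : ℝ) : ℂ)) = 0 := by
    rw [key0, hF]
    simp only [e1, e2]
    ring
  have key1 : ((μ : ℂ)) * ∫ x in (-Real.pi)..Real.pi,
      (((deriv u x * (starRingEnd ℂ) (u x)).im : ℝ) : ℂ) = 0 := by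
    rw [← intervalIntegral.integral_const_mul]
    simp only [Complex.ofReal_mul] at key0'
    exact key0'
  have key2 : (∫ x in (-Real.pi)..Real.pi, (deriv u x * (starRingEnd ℂ) (u x)).im) = 0 := by
    have h := (mul_eq_zero.mp key1).resolve_left (Complex.ofReal_ne_zero.mpr hμ)
    rw [intervalIntegral.integral_ofReal] at h
    exact_mod_cast h
  have hintw : IntervalIntegrable (fun x => deriv u x * (starRingEnd ℂ) (u x))
      MeasureTheory.volume (-Real.pi) Real.pi := by
    exact hcw.intervalIntegrable _ _
  have part2 : (∫ x in (-Real.pi)..Real.pi, deriv u x * (starRingEnd ℂ) (u x)).im = 0 := by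
    have h := ContinuousLinearMap.intervalIntegral_comp_comm Complex.imCLM hintw
    simp only [Complex.imCLM_apply] at h
    rw [← h]
    exact key2
  refine ⟨?_, part2⟩
  have hpt : ∀ x, deriv u x * (starRingEnd ℂ) (u x) - (starRingEnd ℂ) (deriv u x) * u x
      = (2 * Complex.I) * (((deriv u x * (starRingEnd ℂ) (u x)).im : ℝ) : ℂ) := by
    intro x
    have h := Complex.sub_conj (deriv u x * (starRingEnd ℂ) (u x))
    simp only [map_mul, Complex.conj_conj] at h
    push_cast at h ⊢
    linear_combination h
  rw [intervalIntegral.integral_congr (fun x _ => hpt x),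
    intervalIntegral.integral_const_mul, intervalIntegral.integral_ofReal, key2]
  simp
end
end

section
/- Let d ≠ 0, μ > 0, ε ∈ ℝ, and let V : ℝ → ℝ be 2π-periodic and continuously differentiable with ‖V‖_∞ := sup_x |V(x)| and ‖V'‖_∞ := sup_x |V'(x)|. Then for every a > 0 and every 2π-periodic twice continuously differentiable function φ : ℝ → ℂ, ‖ ε V φ' − (|ε|/2) ‖V'‖_∞ φ ‖_{L²} ≤ (|ε| a / |d|) ‖V‖_∞ ‖ i d φ'' − μ φ ‖_{L²} + |ε| ( ( a μ / |d| + 1/(4a) ) ‖V‖_∞ + (1/2) ‖V'‖_∞ ) ‖φ‖_{L²}. -/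
noncomputable section

open Real MeasureTheory Set

namespace StmtAux

lemma npi_le_pi : -Real.pi ≤ Real.pi := by linarith [Real.pi_pos]

lemma L2sq_nonneg (f : ℝ → ℂ) : 0 ≤ L2sq f :=
  intervalIntegral.integral_nonneg npi_le_pi (fun x _ => by positivity)

lemma L2norm_nonneg (f : ℝ → ℂ) : 0 ≤ L2norm f := Real.sqrt_nonneg _

lemma L2norm_sq (f : ℝ → ℂ) : L2norm f ^ 2 = L2sq f := Real.sq_sqrt (L2sq_nonneg f)

lemma memL2 (f : ℝ → ℂ) (hf : Continuous f) :
    MemLp f (ENNReal.ofReal 2) (volume.restrict (Set.Ioc (-Real.pi) Real.pi)) := by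
  haveI : IsFiniteMeasure (volume.restrict (Set.Ioc (-Real.pi) Real.pi)) :=
    ⟨by rw [Measure.restrict_apply_univ]; exact measure_Ioc_lt_top⟩
  obtain ⟨C, hC⟩ := (isCompact_Icc (a := -Real.pi) (b := Real.pi)).exists_bound_of_continuousOn
    hf.continuousOn
  refine (memLp_top_of_bound hf.aestronglyMeasurable C ?_).mono_exponent le_top
  filter_upwards [ae_restrict_mem measurableSet_Ioc] with x hx
  exact hC x (Ioc_subset_Icc_self hx)

lemma cauchy_schwarz (f g : ℝ → ℂ) (hf : Continuous f) (hg : Continuous g) :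
    (∫ x in (-Real.pi)..Real.pi, ‖f x‖ * ‖g x‖) ≤ L2norm f * L2norm g := by
  have h2 : Real.HolderConjugate 2 2 := Real.HolderConjugate.two_two
  have key := MeasureTheory.integral_mul_le_Lp_mul_Lq_of_nonneg
    (μ := volume.restrict (Set.Ioc (-Real.pi) Real.pi)) h2
    (Filter.Eventually.of_forall fun x => norm_nonneg (f x))
    (Filter.Eventually.of_forall fun x => norm_nonneg (g x))
    ((memL2 f hf).norm) ((memL2 g hg).norm)
  have e : ∀ h : ℝ → ℂ,
      (∫ a, ‖h a‖ ^ (2:ℝ) ∂(volume.restrict (Set.Ioc (-Real.pi) Real.pi))) = L2sq h := by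
    intro h
    rw [L2sq, intervalIntegral.integral_of_le npi_le_pi]
    simp_rw [show (2:ℝ) = ((2:ℕ):ℝ) by norm_num, Real.rpow_natCast]
  rw [e f, e g] at key
  rw [intervalIntegral.integral_of_le npi_le_pi, L2norm, L2norm,
    Real.sqrt_eq_rpow, Real.sqrt_eq_rpow]
  simpa [ENNReal.ofReal] using key

lemma L2norm_congr (f g : ℝ → ℂ) (h : ∀ x, ‖f x‖ = ‖g x‖) : L2norm f = L2norm g := by
  unfold L2norm L2sq
  simp_rw [h]

lemma L2norm_const_mul (c : ℂ) (f : ℝ → ℂ) :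
    L2norm (fun x => c * f x) = ‖c‖ * L2norm f := by
  unfold L2norm L2sq
  simp_rw [norm_mul, mul_pow]
  rw [intervalIntegral.integral_const_mul, Real.sqrt_mul (by positivity),
    Real.sqrt_sq (norm_nonneg c)]

lemma L2norm_mono (f g : ℝ → ℂ) (hf : Continuous f) (hg : Continuous g)
    (h : ∀ x, ‖f x‖ ≤ ‖g x‖) : L2norm f ≤ L2norm g := by
  apply Real.sqrt_le_sqrt
  apply intervalIntegral.integral_mono_on npi_le_pi
    ((hf.norm.pow 2).intervalIntegrable _ _) ((hg.norm.pow 2).intervalIntegrable _ _)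
  intro x _
  exact pow_le_pow_left₀ (norm_nonneg _) (h x) 2

lemma L2norm_add_le (f g : ℝ → ℂ) (hf : Continuous f) (hg : Continuous g) :
    L2norm (fun x => f x + g x) ≤ L2norm f + L2norm g := by
  set F : ℝ → ℂ := fun x => f x + g x with hF
  have hFc : Continuous F := hf.add hg
  have hsq : L2norm F ^ 2 ≤ L2norm F * (L2norm f + L2norm g) := by
    rw [L2norm_sq]
    have h1 : L2sq F ≤ (∫ x in (-Real.pi)..Real.pi, ‖F x‖ * ‖f x‖)
        + ∫ x in (-Real.pi)..Real.pi, ‖F x‖ * ‖g x‖ := by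
      rw [← intervalIntegral.integral_add (f := fun x => ‖F x‖ * ‖f x‖) (g := fun x => ‖F x‖ * ‖g x‖)
        ((hFc.norm.mul hf.norm).intervalIntegrable _ _)
        ((hFc.norm.mul hg.norm).intervalIntegrable _ _)]
      apply intervalIntegral.integral_mono_on npi_le_pi
        ((hFc.norm.pow 2).intervalIntegrable _ _)
        (((hFc.norm.mul hf.norm).add (hFc.norm.mul hg.norm)).intervalIntegrable _ _)
      intro x _
      show ‖F x‖ ^ 2 ≤ ‖F x‖ * ‖f x‖ + ‖F x‖ * ‖g x‖
      have : ‖F x‖ ≤ ‖f x‖ + ‖g x‖ := norm_add_le _ _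
      nlinarith [norm_nonneg (F x), norm_nonneg (f x), norm_nonneg (g x)]
    calc L2sq F ≤ _ := h1
      _ ≤ L2norm F * L2norm f + L2norm F * L2norm g :=
        add_le_add (cauchy_schwarz F f hFc hf) (cauchy_schwarz F g hFc hg)
      _ = L2norm F * (L2norm f + L2norm g) := by ring
  nlinarith [L2norm_nonneg F, L2norm_nonneg f, L2norm_nonneg g]



lemma periodic_deriv {E : Type*} [NormedAddCommGroup E] [NormedSpace ℝ E]
    {f : ℝ → E} {c : ℝ} (h : Function.Periodic f c) :
    Function.Periodic (deriv f) c := by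
  intro x
  have h1 : deriv (fun y => f (y + c)) x = deriv f (x + c) := deriv_comp_add_const ..
  rw [← h1]
  congr 1
  funext y
  exact h y

lemma contDiff_deriv_one {φ : ℝ → ℂ} (hφ : ContDiff ℝ 2 φ) : ContDiff ℝ 1 (deriv φ) := by
  rw [show (2 : WithTop ℕ∞) = 1 + 1 by norm_num] at hφ
  exact (contDiff_succ_iff_deriv.mp hφ).2.2

lemma hasDerivAt_conj {φ : ℝ → ℂ} {p : ℂ} {x : ℝ} (h : HasDerivAt φ p x) :
    HasDerivAt (fun y => (starRingEnd ℂ) (φ y)) ((starRingEnd ℂ) p) x := by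
  have := (Complex.conjCLE.toContinuousLinearMap.hasFDerivAt (x := φ x)).comp_hasDerivAt x h
  exact h.star

lemma ibp (φ : ℝ → ℂ) (hφ : ContDiff ℝ 2 φ) (hper : Per φ) :
    L2sq (deriv φ) ≤ L2norm (deriv (deriv φ)) * L2norm φ := by
  have hφ1 : ContDiff ℝ 1 (deriv φ) := contDiff_deriv_one hφ
  have hφc : Continuous φ := hφ.continuous
  have hφ'c : Continuous (deriv φ) := hφ1.continuous
  have hφ''c : Continuous (deriv (deriv φ)) := hφ1.continuous_deriv le_rfl
  have hd1 : ∀ x : ℝ, HasDerivAt φ (deriv φ x) x := fun x =>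
    ((hφ.differentiable (by norm_num)) x).hasDerivAt
  have hd2 : ∀ x : ℝ, HasDerivAt (deriv φ) (deriv (deriv φ) x) x := fun x =>
    ((hφ1.differentiable one_ne_zero) x).hasDerivAt
  set A : ℝ → ℂ := fun x => deriv (deriv φ) x * (starRingEnd ℂ) (φ x) with hA
  set B : ℝ → ℂ := fun x => deriv φ x * (starRingEnd ℂ) (deriv φ x) with hB
  have hconjc : Continuous fun y => (starRingEnd ℂ) (φ y) := continuous_star.comp hφc
  have hconj'c : Continuous fun y => (starRingEnd ℂ) (deriv φ y) := continuous_star.comp hφ'c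
  have hAc : Continuous A := hφ''c.mul hconjc
  have hBc : Continuous B := hφ'c.mul hconj'c
  -- integration by parts
  have hF : ∀ x ∈ Set.uIcc (-Real.pi) Real.pi,
      HasDerivAt (fun y => deriv φ y * (starRingEnd ℂ) (φ y)) (A x + B x) x := by
    intro x _
    exact (hd2 x).mul (hasDerivAt_conj (hd1 x))
  have hint : IntervalIntegrable (fun x => A x + B x) volume (-Real.pi) Real.pi :=
    (hAc.add hBc).intervalIntegrable _ _
  have heq := intervalIntegral.integral_eq_sub_of_hasDerivAt hF hint
  have hper' : Function.Periodic (deriv φ) (2 * Real.pi) := periodic_deriv hper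
  have hz : deriv φ Real.pi * (starRingEnd ℂ) (φ Real.pi)
      - deriv φ (-Real.pi) * (starRingEnd ℂ) (φ (-Real.pi)) = 0 := by
    have e1 : deriv φ Real.pi = deriv φ (-Real.pi) := by
      have := hper' (-Real.pi); rw [show -Real.pi + 2 * Real.pi = Real.pi by ring] at this
      exact this
    have e2 : φ Real.pi = φ (-Real.pi) := by
      have := hper (-Real.pi); rw [show -Real.pi + 2 * Real.pi = Real.pi by ring] at this
      exact this
    rw [e1, e2]; ring
  rw [hz, intervalIntegral.integral_add (hAc.intervalIntegrable _ _)
    (hBc.intervalIntegrable _ _)] at heq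
  have hBval : (∫ x in (-Real.pi)..Real.pi, B x) = ((L2sq (deriv φ) : ℝ) : ℂ) := by
    rw [show B = fun x => ((‖deriv φ x‖ ^ 2 : ℝ) : ℂ) from funext fun x => by
      simp [hB, Complex.mul_conj, Complex.normSq_eq_norm_sq]]
    rw [intervalIntegral.integral_ofReal, L2sq]
  have hkey : ((L2sq (deriv φ) : ℝ) : ℂ) = -∫ x in (-Real.pi)..Real.pi, A x := by
    rw [← hBval]; linear_combination heq
  have h1 : L2sq (deriv φ) ≤ ‖∫ x in (-Real.pi)..Real.pi, A x‖ := by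
    have : L2sq (deriv φ) = (-∫ x in (-Real.pi)..Real.pi, A x).re := by
      rw [← hkey, Complex.ofReal_re]
    rw [this]
    exact (Complex.re_le_norm _).trans (by rw [norm_neg])
  have h2 : ‖∫ x in (-Real.pi)..Real.pi, A x‖
      ≤ ∫ x in (-Real.pi)..Real.pi, ‖deriv (deriv φ) x‖ * ‖φ x‖ := by
    have := intervalIntegral.norm_integral_le_integral_norm (f := A) (μ := volume) npi_le_pi
    simpa [hA, norm_mul] using this
  calc L2sq (deriv φ) ≤ _ := h1.trans h2
    _ ≤ L2norm (deriv (deriv φ)) * L2norm φ := cauchy_schwarz _ _ hφ''c hφc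
lemma bddAbove_abs_of_periodic {f : ℝ → ℝ} (hper : Function.Periodic f (2 * Real.pi))
    (hf : Continuous f) : BddAbove (Set.range fun y => |f y|) := by
  have h1 : Function.Periodic (fun y => |f y|) (2 * Real.pi) := fun x => by simp [hper x]
  exact (h1.isBounded_of_continuous
    (by positivity : (0:ℝ) < 2 * Real.pi).ne' hf.abs).bddAbove

end StmtAux

open StmtAux

/-- **Lemma (relative bound of `L₂` with respect to `L₁`).** -/
theorem stmt_10
    (d μ ε : ℝ) (hd : d ≠ 0) (hμ : 0 < μ)
    (V : ℝ → ℝ) (hVper : Function.Periodic V (2 * Real.pi)) (hV : ContDiff ℝ 1 V)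
    (a : ℝ) (ha : 0 < a)
    (φ : ℝ → ℂ) (hφ : ContDiff ℝ 2 φ) (hφper : Per φ) :
    L2norm (fun x => (ε : ℂ) * (V x : ℂ) * deriv φ x
        - (((|ε| / 2) * (⨆ y : ℝ, |deriv V y|) : ℝ) : ℂ) * φ x) ≤
      (|ε| * a / |d|) * (⨆ y : ℝ, |V y|) *
        L2norm (fun x => Complex.I * (d : ℂ) * deriv (deriv φ) x - (μ : ℂ) * φ x)
      + |ε| * ((a * μ / |d| + 1 / (4 * a)) * (⨆ y : ℝ, |V y|)
          + (1 / 2) * (⨆ y : ℝ, |deriv V y|)) * L2norm φ := by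
  have hVc : Continuous V := hV.continuous
  have hV'c : Continuous (deriv V) := hV.continuous_deriv le_rfl
  have hV'per : Function.Periodic (deriv V) (2 * Real.pi) := periodic_deriv hVper
  set M : ℝ := ⨆ y : ℝ, |V y| with hMdef
  set M' : ℝ := ⨆ y : ℝ, |deriv V y| with hM'def
  have bddV := bddAbove_abs_of_periodic hVper hVc
  have bddV' := bddAbove_abs_of_periodic hV'per hV'c
  have hVle : ∀ x, |V x| ≤ M := fun x => le_ciSup bddV x
  have hM0 : 0 ≤ M := (abs_nonneg (V 0)).trans (hVle 0)
  have hM'0 : 0 ≤ M' := (abs_nonneg (deriv V 0)).trans (le_ciSup bddV' 0)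
  -- φ continuity facts
  have hφ1 : ContDiff ℝ 1 (deriv φ) := contDiff_deriv_one hφ
  have hφc : Continuous φ := hφ.continuous
  have hφ'c : Continuous (deriv φ) := hφ1.continuous
  have hφ''c : Continuous (deriv (deriv φ)) := hφ1.continuous_deriv le_rfl
  set B : ℝ := L2norm φ with hBdef
  set P : ℝ := L2norm (deriv φ) with hPdef
  set Q : ℝ := L2norm (deriv (deriv φ)) with hQdef
  set N : ℝ := L2norm (fun x => Complex.I * (d : ℂ) * deriv (deriv φ) x - (μ : ℂ) * φ x)
    with hNdef
  have hB0 : 0 ≤ B := L2norm_nonneg _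
  have hP0 : 0 ≤ P := L2norm_nonneg _
  have hQ0 : 0 ≤ Q := L2norm_nonneg _
  have hN0 : 0 ≤ N := L2norm_nonneg _
  have hD : (0:ℝ) < |d| := abs_pos.mpr hd
  have hNc : Continuous fun x => Complex.I * (d : ℂ) * deriv (deriv φ) x - (μ : ℂ) * φ x :=
    (continuous_const.mul hφ''c).sub (continuous_const.mul hφc)
  -- Step A : |d| * Q ≤ N + μ * B
  have stepA : |d| * Q ≤ N + μ * B := by
    have e1 : L2norm (fun x => Complex.I * (d : ℂ) * deriv (deriv φ) x) = |d| * Q := by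
      rw [show (fun x => Complex.I * (d : ℂ) * deriv (deriv φ) x)
          = fun x => (Complex.I * (d : ℂ)) * deriv (deriv φ) x from rfl,
        L2norm_const_mul]
      simp [Complex.norm_real, Real.norm_eq_abs, hQdef]
    have e2 : (fun x => Complex.I * (d : ℂ) * deriv (deriv φ) x)
        = fun x => (Complex.I * (d : ℂ) * deriv (deriv φ) x - (μ : ℂ) * φ x)
            + (μ : ℂ) * φ x := funext fun x => by ring
    have e3 : L2norm (fun x => (μ : ℂ) * φ x) = μ * B := by
      rw [L2norm_const_mul]
      simp [Complex.norm_real, Real.norm_eq_abs, abs_of_pos hμ, hBdef]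
    calc |d| * Q = _ := e1.symm
      _ ≤ N + μ * B := by
          rw [e2]
          exact (L2norm_add_le _ (fun x => (μ : ℂ) * φ x) hNc (continuous_const.mul hφc)).trans
            (by rw [e3])
  -- Step B : P ^ 2 ≤ Q * B
  have stepB : P ^ 2 ≤ Q * B := by
    rw [hPdef, L2norm_sq]
    exact ibp φ hφ hφper
  -- Step C : P ≤ a * Q + (1 / (4 * a)) * B
  have stepC : P ≤ a * Q + (1 / (4 * a)) * B := by
    have h4 : 4 * a * P ≤ 4 * a ^ 2 * Q + B := by
      have h16 : 16 * a ^ 2 * P ^ 2 ≤ 16 * a ^ 2 * (Q * B) :=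
        mul_le_mul_of_nonneg_left stepB (by positivity)
      nlinarith [sq_nonneg (4 * a ^ 2 * Q - B), sq_nonneg (4 * a * P - (4 * a ^ 2 * Q + B)),
        mul_nonneg (mul_nonneg (by norm_num : (0:ℝ) ≤ 4) ha.le) hP0,
        mul_nonneg (mul_nonneg (by norm_num : (0:ℝ) ≤ 4) (sq_nonneg a)) hQ0, hB0]
    have heq2 : a * Q + (1 / (4 * a)) * B = (4 * a ^ 2 * Q + B) / (4 * a) := by
      field_simp
    rw [heq2, le_div_iff₀ (by positivity : (0:ℝ) < 4 * a)]
    linarith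
  -- first triangle split
  have step1 : L2norm (fun x => (ε : ℂ) * (V x : ℂ) * deriv φ x
      - (((|ε| / 2) * M' : ℝ) : ℂ) * φ x) ≤ |ε| * M * P + (|ε| / 2 * M') * B := by
    have hfc : Continuous fun x => (ε : ℂ) * (V x : ℂ) * deriv φ x :=
      (continuous_const.mul (Complex.continuous_ofReal.comp hVc)).mul hφ'c
    have hgc : Continuous fun x => -((((|ε| / 2) * M' : ℝ) : ℂ) * φ x) :=
      (continuous_const.mul hφc).neg
    have esplit : (fun x => (ε : ℂ) * (V x : ℂ) * deriv φ x
        - (((|ε| / 2) * M' : ℝ) : ℂ) * φ x)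
        = fun x => ((ε : ℂ) * (V x : ℂ) * deriv φ x)
            + -((((|ε| / 2) * M' : ℝ) : ℂ) * φ x) := funext fun x => by ring
    rw [esplit]
    have t1 : L2norm (fun x => (ε : ℂ) * (V x : ℂ) * deriv φ x) ≤ |ε| * M * P := by
      have hmono := L2norm_mono (fun x => (ε : ℂ) * (V x : ℂ) * deriv φ x)
        (fun x => (((|ε| * M : ℝ)) : ℂ) * deriv φ x)
        ((continuous_const.mul (Complex.continuous_ofReal.comp hVc)).mul hφ'c)
        (continuous_const.mul hφ'c) ?_
      · refine hmono.trans ?_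
        rw [L2norm_const_mul, Complex.norm_real, Real.norm_eq_abs,
          abs_of_nonneg (mul_nonneg (abs_nonneg ε) hM0)]
      · intro x
        simp only [norm_mul, Complex.norm_real, Real.norm_eq_abs, abs_abs]
        rw [abs_of_nonneg hM0]
        exact mul_le_mul_of_nonneg_right
          (mul_le_mul_of_nonneg_left (hVle x) (abs_nonneg ε)) (norm_nonneg _)
    have t2 : L2norm (fun x => -((((|ε| / 2) * M' : ℝ) : ℂ) * φ x)) = |ε| / 2 * M' * B := by
      rw [L2norm_congr _ (fun x => (((|ε| / 2) * M' : ℝ) : ℂ) * φ x) (fun x => norm_neg _),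
        L2norm_const_mul, Complex.norm_real, Real.norm_eq_abs,
        abs_of_nonneg (mul_nonneg (by positivity : (0:ℝ) ≤ |ε| / 2) hM'0), hBdef]
    calc L2norm _ ≤ _ := L2norm_add_le _ _
          ((continuous_const.mul (Complex.continuous_ofReal.comp hVc)).mul hφ'c) hgc
      _ ≤ |ε| * M * P + (|ε| / 2 * M') * B := by rw [t2]; exact add_le_add t1 le_rfl
  -- combine
  have hQle : Q ≤ (N + μ * B) / |d| := by
    rw [le_div_iff₀ hD]
    linarith [stepA]
  have hPle : P ≤ a * ((N + μ * B) / |d|) + (1 / (4 * a)) * B := by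
    refine stepC.trans ?_
    have := mul_le_mul_of_nonneg_left hQle ha.le
    linarith
  have hfin : |ε| * M * P + (|ε| / 2 * M') * B
      ≤ (|ε| * a / |d|) * M * N
        + |ε| * ((a * μ / |d| + 1 / (4 * a)) * M + (1 / 2) * M') * B := by
    have h1 : |ε| * M * P ≤ |ε| * M * (a * ((N + μ * B) / |d|) + (1 / (4 * a)) * B) :=
      mul_le_mul_of_nonneg_left hPle (mul_nonneg (abs_nonneg ε) hM0)
    have heq : |ε| * M * (a * ((N + μ * B) / |d|) + (1 / (4 * a)) * B) + (|ε| / 2 * M') * B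
        = (|ε| * a / |d|) * M * N
          + |ε| * ((a * μ / |d| + 1 / (4 * a)) * M + (1 / 2) * M') * B := by
      field_simp
      ring
    linarith
  exact step1.trans hfin
end
end
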